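/- arXiv:2407.14079 — 11 statements merged into one kernel-verified Lean document; each statement's English description precedes it below -/
import Mathlib

section
/- Let T > 0 and α > 0 satisfy αT < 1. Let y : [0,∞) → ℝ be continuous and satisfy y(t) ≤ α ∫_{t−T}^{t} y(s) ds for every t ≥ T. Then there exists κ > 0 such that, setting C = sup_{t ∈ [0,T]} |y(t)| e^{κ t}, one has y(t) ≤ C e^{−κ t} for every t ≥ 0. -/
open MeasureTheory Set Filter Topology

/-- Delayed Grönwall lemma: if `y` is continuous on `[0,∞)` and satisfies
`y t ≤ α ∫_{t-T}^t y` for `t ≥ T`, with `α T < 1`, then `y` decays exponentially,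
with constant `C = sup_{t ∈ [0,T]} |y t| e^{κ t}`. -/
theorem delayed_gronwall (T α : ℝ) (hT : 0 < T) (hα : 0 < α) (hαT : α * T < 1)
    (y : ℝ → ℝ) (hy : ContinuousOn y (Ici 0))
    (hineq : ∀ t, T ≤ t → y t ≤ α * ∫ s in (t - T)..t, y s) :
    ∃ κ > 0, ∀ t, 0 ≤ t →
      y t ≤ sSup ((fun s => |y s| * Real.exp (κ * s)) '' Icc 0 T) * Real.exp (-κ * t) := by
  have hαT0 : 0 < α * T := mul_pos hα hT
  set κ := -Real.log (α * T) / (2 * T) with hκdef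
  have hlog : Real.log (α * T) < 0 := Real.log_neg hαT0 hαT
  have hκ0 : 0 < κ := div_pos (by linarith) (by positivity)
  have hκT : 0 < κ * T := mul_pos hκ0 hT
  -- key smallness: α * (e^{κT} - 1) < κ
  have hkey : α * (Real.exp (κ * T) - 1) < κ := by
    have h1 : Real.exp (κ * T) - 1 ≤ κ * T * Real.exp (κ * T) := by
      have := Real.add_one_le_exp (-(κ * T))
      rw [Real.exp_neg] at this
      have hp := Real.exp_pos (κ * T)
      nlinarith [mul_le_mul_of_nonneg_right this hp.le, mul_inv_cancel₀ (ne_of_gt hp)]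
    have h2 : α * T * Real.exp (κ * T) < 1 := by
      have hκTval : κ * T = -Real.log (α * T) / 2 := by
        rw [hκdef, div_mul_eq_mul_div, mul_div_mul_right _ _ hT.ne']
      have : Real.exp (κ * T) < Real.exp (-Real.log (α * T)) := by
        apply Real.exp_lt_exp.mpr
        rw [hκTval]; linarith
      rw [Real.exp_neg, Real.exp_log hαT0] at this
      calc α * T * Real.exp (κ * T) < α * T * (α * T)⁻¹ := by
            exact mul_lt_mul_of_pos_left this hαT0
        _ = 1 := mul_inv_cancel₀ (ne_of_gt hαT0)
    calc α * (Real.exp (κ * T) - 1) ≤ α * (κ * T * Real.exp (κ * T)) :=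
          mul_le_mul_of_nonneg_left h1 hα.le
      _ = κ * (α * T * Real.exp (κ * T)) := by ring
      _ < κ * 1 := mul_lt_mul_of_pos_left h2 hκ0
      _ = κ := mul_one κ
  refine ⟨κ, hκ0, ?_⟩
  set C := sSup ((fun s => |y s| * Real.exp (κ * s)) '' Icc 0 T) with hC
  have hcontw : ContinuousOn (fun s => |y s| * Real.exp (κ * s)) (Icc 0 T) :=
    ((hy.mono Icc_subset_Ici_self).abs).mul (Continuous.continuousOn (by fun_prop))
  have hbdd : BddAbove ((fun s => |y s| * Real.exp (κ * s)) '' Icc 0 T) :=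
    (isCompact_Icc.image_of_continuousOn hcontw).bddAbove
  have hCb : ∀ s ∈ Icc (0:ℝ) T, |y s| * Real.exp (κ * s) ≤ C :=
    fun s hs => le_csSup hbdd ⟨s, hs, rfl⟩
  have hC0 : 0 ≤ C := le_trans (by positivity) (hCb 0 ⟨le_refl 0, hT.le⟩)
  -- main claim with margin ε
  have main : ∀ ε > 0, ∀ t, 0 ≤ t → y t ≤ (C + ε) * Real.exp (-κ * t) := by
    intro ε hε
    by_contra h
    push_neg at h
    obtain ⟨t1, ht1, ht1'⟩ := h
    set S : Set ℝ := {t | 0 ≤ t ∧ (C + ε) * Real.exp (-κ * t) ≤ y t} with hS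
    have hSne : S.Nonempty := ⟨t1, ht1, ht1'.le⟩
    have hSbdd : BddBelow S := ⟨0, fun x hx => hx.1⟩
    have hSclosed : IsClosed S := by
      have : S = Ici 0 ∩ (fun t => y t - (C + ε) * Real.exp (-κ * t)) ⁻¹' Ici 0 := by
        ext t; simp [hS, sub_nonneg, and_comm]
      rw [this]
      exact ContinuousOn.preimage_isClosed_of_isClosed
        ((hy.sub (Continuous.continuousOn (by fun_prop)))) isClosed_Ici isClosed_Ici
    set t0 := sInf S with ht0def
    have ht0S : t0 ∈ S := hSclosed.csInf_mem hSne hSbdd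
    have ht00 : 0 ≤ t0 := ht0S.1
    have ht0y : (C + ε) * Real.exp (-κ * t0) ≤ y t0 := ht0S.2
    have hεC : 0 < C + ε := by linarith
    have hT0 : T ≤ t0 := by
      by_contra hc
      push_neg at hc
      have hmem : t0 ∈ Icc (0:ℝ) T := ⟨ht00, hc.le⟩
      have h1 : y t0 ≤ |y t0| := le_abs_self _
      have h2 : |y t0| = (|y t0| * Real.exp (κ * t0)) * Real.exp (-κ * t0) := by
        rw [mul_assoc, ← Real.exp_add]; simp
      have h3 : (|y t0| * Real.exp (κ * t0)) * Real.exp (-κ * t0) ≤ C * Real.exp (-κ * t0) :=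
        mul_le_mul_of_nonneg_right (hCb t0 hmem) (Real.exp_pos _).le
      have h4 : C * Real.exp (-κ * t0) < (C + ε) * Real.exp (-κ * t0) :=
        mul_lt_mul_of_pos_right (by linarith) (Real.exp_pos _)
      linarith [h1, h2 ▸ h3]
    have ht0pos : 0 < t0 := lt_of_lt_of_le hT hT0
    have hlt : ∀ s, 0 ≤ s → s < t0 → y s < (C + ε) * Real.exp (-κ * s) := by
      intro s hs hst
      by_contra hc
      push_neg at hc
      exact absurd (csInf_le hSbdd ⟨hs, hc⟩) (not_le.mpr hst)
    -- at t0, y t0 ≤ bound via left limit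
    have hyt0le : y t0 ≤ (C + ε) * Real.exp (-κ * t0) := by
      have hcont : ContinuousAt y t0 := hy.continuousAt (Ici_mem_nhds ht0pos)
      have hty : Tendsto y (𝓝[<] t0) (𝓝 (y t0)) :=
        hcont.tendsto.mono_left nhdsWithin_le_nhds
      have htg : Tendsto (fun s => (C + ε) * Real.exp (-κ * s)) (𝓝[<] t0)
          (𝓝 ((C + ε) * Real.exp (-κ * t0))) := by
        exact (Continuous.tendsto (by fun_prop) t0).mono_left nhdsWithin_le_nhds
      refine le_of_tendsto_of_tendsto hty htg ?_
      have hev : ∀ᶠ s in 𝓝[<] t0, 0 < s := by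
        apply eventually_nhdsWithin_of_eventually_nhds
        exact eventually_gt_nhds ht0pos
      filter_upwards [hev, self_mem_nhdsWithin] with s hs1 hs2
      exact (hlt s hs1.le hs2).le
    have hle : ∀ s ∈ Icc (t0 - T) t0, y s ≤ (C + ε) * Real.exp (-κ * s) := by
      intro s hs
      rcases eq_or_lt_of_le hs.2 with heq | hlt'
      · rw [heq]; exact hyt0le
      · exact (hlt s (by linarith [hs.1, hT0]) hlt').le
    have hsub : Set.uIcc (t0 - T) t0 ⊆ Ici 0 := by
      rw [uIcc_of_le (by linarith)]
      intro x hx; exact le_trans (by linarith [hT0]) hx.1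
    have hyint : IntervalIntegrable y volume (t0 - T) t0 :=
      (hy.mono hsub).intervalIntegrable
    have hgint : IntervalIntegrable (fun s => (C + ε) * Real.exp (-κ * s)) volume (t0 - T) t0 :=
      (Continuous.intervalIntegrable (by fun_prop) _ _)
    have hIle : (∫ s in (t0 - T)..t0, y s) ≤ ∫ s in (t0 - T)..t0, (C + ε) * Real.exp (-κ * s) :=
      intervalIntegral.integral_mono_on (by linarith) hyint hgint hle
    have hF : ∀ s : ℝ, HasDerivAt (fun u => -(C + ε) / κ * Real.exp (-κ * u))
        ((C + ε) * Real.exp (-κ * s)) s := by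
      intro s
      have h1 : HasDerivAt (fun u : ℝ => -κ * u) (-κ) s := by
        simpa using (hasDerivAt_id s).const_mul (-κ)
      have h2 := (Real.hasDerivAt_exp (-κ * s)).comp s h1
      have h3 := h2.const_mul (-(C + ε) / κ)
      refine h3.congr_deriv ?_
      rw [div_mul_eq_mul_div, div_eq_iff hκ0.ne']
      ring
    have hIval : (∫ s in (t0 - T)..t0, (C + ε) * Real.exp (-κ * s))
        = (C + ε) / κ * (Real.exp (-κ * (t0 - T)) - Real.exp (-κ * t0)) := by
      rw [intervalIntegral.integral_eq_sub_of_hasDerivAt (fun s _ => hF s) hgint]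
      field_simp
      ring
    have hineqt0 := hineq t0 hT0
    have hexp : Real.exp (-κ * (t0 - T)) = Real.exp (-κ * t0) * Real.exp (κ * T) := by
      rw [← Real.exp_add]; congr 1; ring
    have hfinal : α * ((C + ε) / κ * (Real.exp (-κ * (t0 - T)) - Real.exp (-κ * t0)))
        < (C + ε) * Real.exp (-κ * t0) := by
      have hEp := Real.exp_pos (-κ * t0)
      have h1 : α * (Real.exp (κ * T) - 1) < κ := hkey
      have heq2 : α * ((C + ε) / κ * (Real.exp (-κ * (t0 - T)) - Real.exp (-κ * t0)))
          = ((C + ε) * Real.exp (-κ * t0)) * (α * (Real.exp (κ * T) - 1)) / κ := by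
        rw [hexp]; field_simp
      rw [heq2, div_lt_iff₀ hκ0]
      nlinarith [mul_pos hεC hEp]
    have : y t0 ≤ α * ((C + ε) / κ * (Real.exp (-κ * (t0 - T)) - Real.exp (-κ * t0))) := by
      calc y t0 ≤ α * ∫ s in (t0 - T)..t0, y s := hineqt0
        _ ≤ α * ∫ s in (t0 - T)..t0, (C + ε) * Real.exp (-κ * s) :=
            mul_le_mul_of_nonneg_left hIle hα.le
        _ = _ := by rw [hIval]
    linarith
  -- conclude by letting ε → 0
  intro t ht
  refine le_of_forall_pos_le_add ?_
  intro ε hε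
  have hε' : 0 < ε * Real.exp (κ * t) := by positivity
  have := main (ε * Real.exp (κ * t)) hε' t ht
  have hee : Real.exp (κ * t) * Real.exp (-κ * t) = 1 := by
    rw [← Real.exp_add]; simp
  calc y t ≤ (C + ε * Real.exp (κ * t)) * Real.exp (-κ * t) := this
    _ = C * Real.exp (-κ * t) + ε * (Real.exp (κ * t) * Real.exp (-κ * t)) := by ring
    _ = C * Real.exp (-κ * t) + ε := by rw [hee, mul_one]
end

section
/- Let T > 0 and α > 0. Let y : [0,∞) → ℝ be continuous and satisfy y(t) ≤ α ∫_{t−T}^{t} y(s) ds for every t ≥ T. If y(t) ≤ 0 for every t ∈ [0,T], then y(t) ≤ 0 for every t ≥ 0. -/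
open MeasureTheory Set

/-- Sign propagation for the delayed integral inequality: if `y` is continuous on `[0,∞)`,
satisfies `y t ≤ α ∫_{t-T}^t y` for `t ≥ T`, and is nonpositive on `[0,T]`,
then it is nonpositive on all of `[0,∞)`. -/
theorem delayed_gronwall_sign (T α : ℝ) (hT : 0 < T) (hα : 0 < α)
    (y : ℝ → ℝ) (hy : ContinuousOn y (Ici 0))
    (hineq : ∀ t, T ≤ t → y t ≤ α * ∫ s in (t - T)..t, y s)
    (hinit : ∀ t ∈ Icc (0:ℝ) T, y t ≤ 0) :
    ∀ t, 0 ≤ t → y t ≤ 0 := by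
  by_contra h
  push_neg at h
  obtain ⟨t₁, ht₁0, ht₁pos⟩ := h
  set A : Set ℝ := {t | 0 ≤ t ∧ 0 < y t} with hA
  have hAne : A.Nonempty := ⟨t₁, ht₁0, ht₁pos⟩
  have hAbdd : BddBelow A := ⟨0, fun a ha => ha.1⟩
  set t₀ := sInf A with ht₀def
  have hTt₀ : T ≤ t₀ := by
    apply le_csInf hAne
    intro a ha
    by_contra hc
    push_neg at hc
    exact absurd (hinit a ⟨ha.1, hc.le⟩) (not_le.mpr ha.2)
  have ht₀0 : (0:ℝ) < t₀ := lt_of_lt_of_le hT hTt₀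
  -- y ≤ 0 on [0, t₀)
  have hleft : ∀ s, 0 ≤ s → s < t₀ → y s ≤ 0 := by
    intro s hs0 hst
    by_contra hc
    push_neg at hc
    exact absurd (csInf_le hAbdd ⟨hs0, hc⟩) (not_le.mpr hst)
  -- y t₀ ≤ 0 by continuity from the left
  have hyt₀ : y t₀ ≤ 0 := by
    have hcl : t₀ ∈ closure (Ioo 0 t₀) := by
      rw [closure_Ioo (ne_of_lt ht₀0)]
      exact ⟨ht₀0.le, le_refl _⟩
    have hne : (nhdsWithin t₀ (Ioo 0 t₀)).NeBot :=
      mem_closure_iff_nhdsWithin_neBot.mp hcl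
    have htend : Filter.Tendsto y (nhdsWithin t₀ (Ioo 0 t₀)) (nhds (y t₀)) := by
      have := (hy t₀ ht₀0.le).tendsto
      exact this.mono_left (nhdsWithin_mono t₀ (fun x hx => hx.1.le))
    refine le_of_tendsto htend ?_
    filter_upwards [self_mem_nhdsWithin] with s hs
    exact hleft s hs.1.le hs.2
  have hclosed : ∀ s, 0 ≤ s → s ≤ t₀ → y s ≤ 0 := by
    intro s hs0 hst
    rcases eq_or_lt_of_le hst with rfl | h'
    · exact hyt₀
    · exact hleft s hs0 h'
  -- choose δ
  set δ := min T (1/(2*α)) with hδdef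
  have hδpos : 0 < δ := lt_min hT (by positivity)
  have hδT : δ ≤ T := min_le_left _ _
  have hδα : α * δ ≤ 1/2 := by
    have : δ ≤ 1/(2*α) := min_le_right _ _
    calc α * δ ≤ α * (1/(2*α)) := by nlinarith
      _ = 1/2 := by field_simp
  -- integrability helper
  have hint : ∀ a b : ℝ, 0 ≤ a → 0 ≤ b → IntervalIntegrable y volume a b := by
    intro a b ha hb
    exact (hy.mono (fun x hx => le_trans (le_min ha hb) hx.1)).intervalIntegrable
  -- max of y on [t₀, t₀ + δ]
  have hcmp : IsCompact (Icc t₀ (t₀ + δ)) := isCompact_Icc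
  have hIccne : (Icc t₀ (t₀ + δ)).Nonempty := nonempty_Icc.mpr (by linarith)
  have hycont : ContinuousOn y (Icc t₀ (t₀ + δ)) :=
    hy.mono (fun x hx => le_trans ht₀0.le hx.1)
  obtain ⟨s, hsmem, hsmax⟩ := hcmp.exists_isMaxOn hIccne hycont
  -- claim : y s ≤ 0
  have hM : y s ≤ 0 := by
    by_contra hc
    push_neg at hc
    have hsT : T ≤ s := le_trans hTt₀ hsmem.1
    have hs0 : 0 ≤ s := le_trans ht₀0.le hsmem.1
    have hsT0 : 0 ≤ s - T := by linarith
    have hsTt₀ : s - T ≤ t₀ := by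
      have := hsmem.2
      linarith [hδT]
    have ht₀s : t₀ ≤ s := hsmem.1
    -- split the integral
    have hsplit : (∫ u in (s - T)..s, y u)
        = (∫ u in (s - T)..t₀, y u) + ∫ u in t₀..s, y u := by
      rw [intervalIntegral.integral_add_adjacent_intervals
        (hint _ _ hsT0 ht₀0.le) (hint _ _ ht₀0.le hs0)]
    -- first integral ≤ 0
    have h1 : (∫ u in (s - T)..t₀, y u) ≤ 0 := by
      have : (∫ u in (s - T)..t₀, y u) ≤ ∫ u in (s - T)..t₀, (0:ℝ) := by
        apply intervalIntegral.integral_mono_on hsTt₀ (hint _ _ hsT0 ht₀0.le)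
          intervalIntegrable_const
        intro u hu
        exact hclosed u (le_trans hsT0 hu.1) hu.2
      simpa using this
    -- second integral ≤ (s - t₀) * y s
    have h2 : (∫ u in t₀..s, y u) ≤ (s - t₀) * y s := by
      have : (∫ u in t₀..s, y u) ≤ ∫ u in t₀..s, y s := by
        apply intervalIntegral.integral_mono_on ht₀s (hint _ _ ht₀0.le hs0)
          intervalIntegrable_const
        intro u hu
        exact hsmax ⟨hu.1, le_trans hu.2 hsmem.2⟩
      simpa [intervalIntegral.integral_const, smul_eq_mul] using this
    have hst₀δ : s - t₀ ≤ δ := by linarith [hsmem.2]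
    have key := hineq s hsT
    rw [hsplit] at key
    have : y s ≤ α * ((s - t₀) * y s) := by nlinarith
    have h3 : α * ((s - t₀) * y s) ≤ (1/2) * y s := by
      have h4 : α * (s - t₀) ≤ 1/2 := by
        have h5 : 0 ≤ s - t₀ := by linarith
        nlinarith
      have : α * ((s - t₀) * y s) = (α * (s - t₀)) * y s := by ring
      rw [this]
      nlinarith
    nlinarith
  -- so y ≤ 0 on [t₀, t₀+δ], hence on [0, t₀+δ]
  have hall : ∀ u, 0 ≤ u → u ≤ t₀ + δ → y u ≤ 0 := by
    intro u hu0 hu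
    rcases le_or_gt u t₀ with h' | h'
    · exact hclosed u hu0 h'
    · exact le_trans (hsmax ⟨h'.le, hu⟩) hM
  -- contradiction with sInf
  obtain ⟨a, haA, halt⟩ := exists_lt_of_csInf_lt hAne (show sInf A < t₀ + δ by
    rw [← ht₀def]; linarith)
  exact absurd (hall a haA.1 halt.le) (not_le.mpr haA.2)
end

section
/- Let λ > 0, let c : [0,1] → ℝ be continuous with c(x) > 0 for all x ∈ [0,1], and let ρ : [0,1] → ℝ be Lebesgue integrable. Suppose V : [0,1] → ℝ is continuously differentiable with V(0) = V(1) = 0, and V' is absolutely continuous with a.e. derivative V'' ∈ L¹(0,1) satisfying −λ² V''(x) + c(x) V(x) = ρ(x) for a.e. x ∈ (0,1). Then ∫₀¹ c(x) |V(x)| dx ≤ ∫₀¹ |ρ(x)| dx. -/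
open MeasureTheory Set


noncomputable def ellPhi (ε y : ℝ) : ℝ := y / Real.sqrt (y ^ 2 + ε ^ 2)
noncomputable def ellW (ε y : ℝ) : ℝ := ε ^ 2 / (Real.sqrt (y ^ 2 + ε ^ 2) * (y ^ 2 + ε ^ 2))

lemma ell_q_pos {ε : ℝ} (hε : ε ≠ 0) (y : ℝ) : 0 < y ^ 2 + ε ^ 2 := by positivity

lemma ell_s_pos {ε : ℝ} (hε : ε ≠ 0) (y : ℝ) : 0 < Real.sqrt (y ^ 2 + ε ^ 2) :=
  Real.sqrt_pos.2 (ell_q_pos hε y)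

lemma ellPhi_zero {ε : ℝ} : ellPhi ε 0 = 0 := by simp [ellPhi]

lemma abs_ellPhi_le {ε : ℝ} (hε : ε ≠ 0) (y : ℝ) : |ellPhi ε y| ≤ 1 := by
  have hs := ell_s_pos hε y
  rw [ellPhi, abs_div, abs_of_pos hs, div_le_one hs]
  calc |y| = Real.sqrt (y ^ 2) := (Real.sqrt_sq_eq_abs y).symm
  _ ≤ Real.sqrt (y ^ 2 + ε ^ 2) := Real.sqrt_le_sqrt (le_add_of_nonneg_right (sq_nonneg ε))

lemma ellW_nonneg {ε : ℝ} (hε : ε ≠ 0) (y : ℝ) : 0 ≤ ellW ε y := by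
  have hs := ell_s_pos hε y
  have hq := ell_q_pos hε y
  exact div_nonneg (sq_nonneg ε) (by positivity)

lemma hasDerivAt_ellPhi {ε : ℝ} (hε : ε ≠ 0) (y : ℝ) :
    HasDerivAt (ellPhi ε) (ellW ε y) y := by
  have hq := ell_q_pos hε y
  have hs := ell_s_pos hε y
  have h1 : HasDerivAt (fun y : ℝ => y ^ 2 + ε ^ 2) (2 * y) y := by
    simpa using (hasDerivAt_pow 2 y).add_const (ε ^ 2)
  have h2 : HasDerivAt (fun y : ℝ => Real.sqrt (y ^ 2 + ε ^ 2))
      (1 / (2 * Real.sqrt (y ^ 2 + ε ^ 2)) * (2 * y)) y :=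
    (Real.hasDerivAt_sqrt hq.ne').comp y h1
  have h3 := (hasDerivAt_id y).div h2 hs.ne'
  convert h3 using 1
  · rfl
  · rfl
  · rfl
  have hs2 : Real.sqrt (y ^ 2 + ε ^ 2) ^ 2 = y ^ 2 + ε ^ 2 := Real.sq_sqrt hq.le
  rw [ellW, id]
  field_simp
  linear_combination (-(y ^ 2)) * hs2

lemma continuous_ellW {ε : ℝ} (hε : ε ≠ 0) : Continuous (ellW ε) := by
  apply continuous_const.div
  · exact (Real.continuous_sqrt.comp (by continuity)).mul (by continuity)
  · intro y
    have hs := ell_s_pos hε y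
    have hq := ell_q_pos hε y
    positivity

lemma continuous_ellPhi {ε : ℝ} (hε : ε ≠ 0) : Continuous (ellPhi ε) := by
  apply continuous_id'.div
  · exact Real.continuous_sqrt.comp (by continuity)
  · exact fun y => (ell_s_pos hε y).ne'

lemma ell_parts (g h : ℝ → ℝ) (hg : IntegrableOn g (Ioc 0 1))
    (hh : IntegrableOn h (Ioc 0 1)) :
    ∫ x in Ioc (0:ℝ) 1, g x * ∫ t in Ioc x 1, h t
      = ∫ t in Ioc (0:ℝ) 1, (∫ x in Ioc 0 t, g x) * h t := by
  set μ := volume.restrict (Ioc (0:ℝ) 1) with hμ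
  set F : ℝ × ℝ → ℝ := {p : ℝ × ℝ | p.1 < p.2}.indicator (fun p => g p.1 * h p.2) with hF
  have hset : MeasurableSet {p : ℝ × ℝ | p.1 < p.2} :=
    measurableSet_lt measurable_fst measurable_snd
  have hFint : Integrable F (μ.prod μ) := (hg.mul_prod hh).indicator hset
  have swap := MeasureTheory.integral_integral_swap
    (f := fun x t => F (x, t)) (μ := μ) (ν := μ) hFint
  have hL : ∫ x, (∫ t, F (x, t) ∂μ) ∂μ = ∫ x in Ioc (0:ℝ) 1, g x * ∫ t in Ioc x 1, h t := by
    apply integral_congr_ae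
    filter_upwards [ae_restrict_mem measurableSet_Ioc] with x hx
    have h1 : ∀ t, F (x, t) = (Ioi x).indicator (fun t => g x * h t) t := by
      intro t
      simp only [hF, Set.indicator_apply, Set.mem_setOf_eq, Set.mem_Ioi]
    calc ∫ t, F (x, t) ∂μ = ∫ t, (Ioi x).indicator (fun t => g x * h t) t ∂μ := by
          simp_rw [h1]
      _ = ∫ t in Ioi x, g x * h t ∂μ := integral_indicator measurableSet_Ioi
      _ = ∫ t in Ioi x ∩ Ioc 0 1, g x * h t := by rw [hμ, Measure.restrict_restrict measurableSet_Ioi]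
      _ = ∫ t in Ioc x 1, g x * h t := by
          have hxset : Ioi x ∩ Ioc 0 1 = Ioc x 1 := by
            ext t
            simp only [mem_inter_iff, mem_Ioi, mem_Ioc]
            exact ⟨fun ⟨h1, _, h3⟩ => ⟨h1, h3⟩, fun ⟨h1, h2⟩ => ⟨h1, hx.1.trans h1, h2⟩⟩
          rw [hxset]
      _ = g x * ∫ t in Ioc x 1, h t := integral_const_mul _ _
  have hR : ∫ t, (∫ x, F (x, t) ∂μ) ∂μ = ∫ t in Ioc (0:ℝ) 1, (∫ x in Ioc 0 t, g x) * h t := by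
    apply integral_congr_ae
    filter_upwards [ae_restrict_mem measurableSet_Ioc] with t ht
    have h1 : ∀ x, F (x, t) = (Iio t).indicator (fun x => g x * h t) x := by
      intro x
      simp only [hF, Set.indicator_apply, Set.mem_setOf_eq, Set.mem_Iio]
    calc ∫ x, F (x, t) ∂μ = ∫ x, (Iio t).indicator (fun x => g x * h t) x ∂μ := by
          simp_rw [h1]
      _ = ∫ x in Iio t, g x * h t ∂μ := integral_indicator measurableSet_Iio
      _ = ∫ x in Iio t ∩ Ioc 0 1, g x * h t := by rw [hμ, Measure.restrict_restrict measurableSet_Iio]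
      _ = ∫ x in Ioo 0 t, g x * h t := by
          have htset : Iio t ∩ Ioc 0 1 = Ioo 0 t := by
            ext x
            simp only [mem_inter_iff, mem_Iio, mem_Ioc, mem_Ioo]
            exact ⟨fun ⟨h1, h2, _⟩ => ⟨h2, h1⟩, fun ⟨h1, h2⟩ => ⟨h2, h1, h2.le.trans ht.2⟩⟩
          rw [htset]
      _ = ∫ x in Ioc 0 t, g x * h t := (integral_Ioc_eq_integral_Ioo).symm
      _ = (∫ x in Ioc 0 t, g x) * h t := integral_mul_const _ _
  rw [← hL, ← hR]
  exact swap
lemma ell_key (lam : ℝ) (hlam : 0 < lam)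
    (c : ℝ → ℝ) (hc_cont : ContinuousOn c (Icc 0 1))
    (ρ : ℝ → ℝ) (hρ : IntegrableOn ρ (Icc 0 1))
    (V V' V'' : ℝ → ℝ)
    (hV : ∀ x ∈ Icc (0:ℝ) 1, HasDerivWithinAt V (V' x) (Icc 0 1) x)
    (hV'cont : ContinuousOn V' (Icc 0 1))
    (hV''int : IntegrableOn V'' (Icc 0 1))
    (hAC : ∀ x ∈ Icc (0:ℝ) 1, V' x = V' 0 + ∫ t in (0:ℝ)..x, V'' t)
    (hb0 : V 0 = 0) (hb1 : V 1 = 0)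
    (heq : ∀ᵐ x ∂(volume.restrict (Ioo (0:ℝ) 1)),
      -lam ^ 2 * V'' x + c x * V x = ρ x)
    (ε : ℝ) (hε : 0 < ε) :
    ∫ x in Ioc (0:ℝ) 1, c x * (V x * ellPhi ε (V x)) ≤ ∫ x in Ioc (0:ℝ) 1, |ρ x| := by
  have hIoc : Ioc (0:ℝ) 1 ⊆ Icc 0 1 := Ioc_subset_Icc_self
  have hIoo : Ioo (0:ℝ) 1 ⊆ Icc 0 1 := Ioo_subset_Icc_self
  have hVcont : ContinuousOn V (Icc 0 1) := fun x hx => (hV x hx).continuousWithinAt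
  set u : ℝ → ℝ := fun x => ellPhi ε (V x) with hu_def
  set u' : ℝ → ℝ := fun x => ellW ε (V x) * V' x with hu'_def
  have hud : ∀ x ∈ Icc (0:ℝ) 1, HasDerivWithinAt u (u' x) (Icc 0 1) x := fun x hx =>
    (hasDerivAt_ellPhi hε.ne' (V x)).comp_hasDerivWithinAt x (hV x hx)
  have hu'cont : ContinuousOn u' (Icc 0 1) :=
    (((continuous_ellW hε.ne').comp_continuousOn hVcont)).mul hV'cont
  have hucont : ContinuousOn u (Icc 0 1) :=
    (continuous_ellPhi hε.ne').comp_continuousOn hVcont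
  have hu0 : u 0 = 0 := by rw [hu_def]; simp [hb0, ellPhi_zero]
  have hu1 : u 1 = 0 := by rw [hu_def]; simp [hb1, ellPhi_zero]
  have hub : ∀ x, |u x| ≤ 1 := fun x => abs_ellPhi_le hε.ne' (V x)
  -- FTC for u on [x,1]
  have hftc : ∀ x ∈ Icc (0:ℝ) 1, ∫ t in x..1, u' t = u 1 - u x := by
    intro x hx
    apply intervalIntegral.integral_eq_sub_of_hasDeriv_right
    · rw [uIcc_of_le hx.2]
      exact hucont.mono (Icc_subset_Icc hx.1 le_rfl)
    · intro t ht
      rw [min_eq_left hx.2, max_eq_right hx.2] at ht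
      have ht' : t ∈ Icc (0:ℝ) 1 := ⟨(hx.1.trans ht.1.le), ht.2.le⟩
      exact (((hud t ht').hasDerivAt
        (Icc_mem_nhds (lt_of_le_of_lt hx.1 ht.1) ht.2)).hasDerivWithinAt)
    · exact (hu'cont.mono (by rw [uIcc_of_le hx.2]; exact Icc_subset_Icc hx.1 le_rfl)).intervalIntegrable
  -- hAC in set-integral form
  have hAC' : ∀ x ∈ Icc (0:ℝ) 1, ∫ t in Ioc (0:ℝ) x, V'' t = V' x - V' 0 := by
    intro x hx
    rw [← intervalIntegral.integral_of_le hx.1, hAC x hx]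
    ring
  -- the key sign fact: ∫ V'' u ≤ 0
  have hsign : ∫ x in Ioc (0:ℝ) 1, V'' x * u x ≤ 0 := by
    have h1 : ∀ x ∈ Ioc (0:ℝ) 1, V'' x * u x = -(V'' x * ∫ t in Ioc x 1, u' t) := by
      intro x hx
      have := hftc x (hIoc hx)
      rw [intervalIntegral.integral_of_le hx.2, hu1] at this
      have hux : u x = -∫ t in Ioc x 1, u' t := by linarith [this]
      rw [hux]; ring
    have h2 : ∫ x in Ioc (0:ℝ) 1, V'' x * u x
        = -∫ x in Ioc (0:ℝ) 1, V'' x * ∫ t in Ioc x 1, u' t := by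
      rw [← integral_neg]
      exact setIntegral_congr_fun measurableSet_Ioc (fun x hx => by rw [h1 x hx])
    have hu'int : IntegrableOn u' (Ioc 0 1) :=
      (hu'cont.integrableOn_Icc.mono_set hIoc)
    have h3 := ell_parts V'' u' (hV''int.mono_set hIoc) hu'int
    have h4 : ∫ t in Ioc (0:ℝ) 1, (∫ x in Ioc 0 t, V'' x) * u' t
        = ∫ t in Ioc (0:ℝ) 1, (V' t - V' 0) * u' t := by
      apply setIntegral_congr_fun measurableSet_Ioc
      intro t ht
      show (∫ x in Ioc (0:ℝ) t, V'' x) * u' t = (V' t - V' 0) * u' t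
      rw [hAC' t (hIoc ht)]
    -- ∫ (V' t - V' 0) * u' t = ∫ V' u' - V'0 * (u1 - u0) = ∫ V' u'
    have hV'u'int : IntegrableOn (fun t => V' t * u' t) (Ioc 0 1) :=
      (hV'cont.mul hu'cont).integrableOn_Icc.mono_set hIoc
    have hconstu'int : IntegrableOn (fun t => V' 0 * u' t) (Ioc 0 1) :=
      (hu'int.const_mul _)
    have h5 : ∫ t in Ioc (0:ℝ) 1, (V' t - V' 0) * u' t
        = (∫ t in Ioc (0:ℝ) 1, V' t * u' t) - ∫ t in Ioc (0:ℝ) 1, V' 0 * u' t := by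
      rw [← integral_sub hV'u'int hconstu'int]
      apply setIntegral_congr_fun measurableSet_Ioc
      intro t _; ring
    have h6 : ∫ t in Ioc (0:ℝ) 1, V' 0 * u' t = 0 := by
      rw [integral_const_mul, ← intervalIntegral.integral_of_le (zero_le_one),
        hftc 0 ⟨le_rfl, zero_le_one⟩, hu1, hu0]
      ring
    have h7 : 0 ≤ ∫ t in Ioc (0:ℝ) 1, V' t * u' t := by
      apply setIntegral_nonneg measurableSet_Ioc
      intro t ht
      have : V' t * u' t = ellW ε (V t) * (V' t) ^ 2 := by rw [hu'_def]; ring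
      rw [this]
      exact mul_nonneg (ellW_nonneg hε.ne' _) (sq_nonneg _)
    rw [h2, h3, h4, h5, h6]
    linarith
  -- integrability facts
  have hρIoc : IntegrableOn ρ (Ioc 0 1) := hρ.mono_set hIoc
  have huAESM : AEStronglyMeasurable u (volume.restrict (Ioc (0:ℝ) 1)) :=
    (hucont.mono hIoc).aestronglyMeasurable measurableSet_Ioc
  have hρu_int : IntegrableOn (fun x => ρ x * u x) (Ioc 0 1) := by
    apply Integrable.mono' hρIoc.abs (hρIoc.aestronglyMeasurable.mul huAESM)
    filter_upwards with x
    simp only [Pi.mul_apply, Real.norm_eq_abs, abs_mul]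
    calc |ρ x| * |u x| ≤ |ρ x| * 1 := mul_le_mul_of_nonneg_left (hub x) (abs_nonneg _)
    _ = |ρ x| := mul_one _
  have hV''u_int : IntegrableOn (fun x => V'' x * u x) (Ioc 0 1) := by
    apply Integrable.mono' (hV''int.mono_set hIoc).abs
      ((hV''int.mono_set hIoc).aestronglyMeasurable.mul huAESM)
    filter_upwards with x
    simp only [Pi.mul_apply, Real.norm_eq_abs, abs_mul]
    calc |V'' x| * |u x| ≤ |V'' x| * 1 := mul_le_mul_of_nonneg_left (hub x) (abs_nonneg _)
    _ = |V'' x| := mul_one _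
  -- the PDE multiplied by u, integrated
  have heq2 : ∀ᵐ x ∂(volume.restrict (Ioo (0:ℝ) 1)),
      c x * (V x * u x) = ρ x * u x + lam ^ 2 * (V'' x * u x) := by
    filter_upwards [heq] with x hx
    linear_combination u x * hx
  have hmain : ∫ x in Ioc (0:ℝ) 1, c x * (V x * u x)
      = (∫ x in Ioc (0:ℝ) 1, ρ x * u x) + lam ^ 2 * ∫ x in Ioc (0:ℝ) 1, V'' x * u x := by
    rw [integral_Ioc_eq_integral_Ioo, integral_Ioc_eq_integral_Ioo,
      integral_Ioc_eq_integral_Ioo]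
    rw [integral_congr_ae heq2, ← integral_const_mul]
    apply integral_add
    · exact (hρu_int.mono_set Ioo_subset_Ioc_self)
    · exact ((hV''u_int.mono_set Ioo_subset_Ioc_self).const_mul _)
  have hρ_le : ∫ x in Ioc (0:ℝ) 1, ρ x * u x ≤ ∫ x in Ioc (0:ℝ) 1, |ρ x| := by
    apply integral_mono_ae hρu_int hρIoc.abs
    filter_upwards with x
    calc ρ x * u x ≤ |ρ x * u x| := le_abs_self _
    _ = |ρ x| * |u x| := abs_mul _ _
    _ ≤ |ρ x| * 1 := mul_le_mul_of_nonneg_left (hub x) (abs_nonneg _)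
    _ = |ρ x| := mul_one _
  have hlam2 : lam ^ 2 * (∫ x in Ioc (0:ℝ) 1, V'' x * u x) ≤ 0 :=
    mul_nonpos_of_nonneg_of_nonpos (sq_nonneg lam) hsign
  calc ∫ x in Ioc (0:ℝ) 1, c x * (V x * u x)
      = (∫ x in Ioc (0:ℝ) 1, ρ x * u x) + lam ^ 2 * ∫ x in Ioc (0:ℝ) 1, V'' x * u x := hmain
    _ ≤ (∫ x in Ioc (0:ℝ) 1, |ρ x|) + 0 := add_le_add hρ_le hlam2
    _ = ∫ x in Ioc (0:ℝ) 1, |ρ x| := add_zero _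
/-- `L¹` estimate `∫ c |V| ≤ ∫ |ρ|` for a strong solution `V ∈ W^{2,1}(0,1)` of the
linear elliptic problem `-λ² V'' + c V = ρ` with homogeneous Dirichlet boundary conditions. -/
theorem linear_elliptic_L1_estimate (lam : ℝ) (hlam : 0 < lam)
    (c : ℝ → ℝ) (hc_cont : ContinuousOn c (Icc 0 1))
    (hc_pos : ∀ x ∈ Icc (0:ℝ) 1, 0 < c x)
    (ρ : ℝ → ℝ) (hρ : IntegrableOn ρ (Icc 0 1))
    (V V' V'' : ℝ → ℝ)
    (hV : ∀ x ∈ Icc (0:ℝ) 1, HasDerivWithinAt V (V' x) (Icc 0 1) x)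
    (hV'cont : ContinuousOn V' (Icc 0 1))
    (hV''int : IntegrableOn V'' (Icc 0 1))
    (hAC : ∀ x ∈ Icc (0:ℝ) 1, V' x = V' 0 + ∫ t in (0:ℝ)..x, V'' t)
    (hb0 : V 0 = 0) (hb1 : V 1 = 0)
    (heq : ∀ᵐ x ∂(volume.restrict (Ioo (0:ℝ) 1)),
      -lam ^ 2 * V'' x + c x * V x = ρ x) :
    ∫ x in (0:ℝ)..1, c x * |V x| ≤ ∫ x in (0:ℝ)..1, |ρ x| := by
  rw [intervalIntegral.integral_of_le zero_le_one, intervalIntegral.integral_of_le zero_le_one]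
  have hIoc : Ioc (0:ℝ) 1 ⊆ Icc 0 1 := Ioc_subset_Icc_self
  have hVcont : ContinuousOn V (Icc 0 1) := fun x hx => (hV x hx).continuousWithinAt
  set F : ℕ → ℝ → ℝ := fun n x => c x * (V x * ellPhi (1 / (n + 1)) (V x)) with hF
  have hεpos : ∀ n : ℕ, 0 < 1 / ((n : ℝ) + 1) := fun n => by positivity
  have hkey : ∀ n : ℕ, ∫ x in Ioc (0:ℝ) 1, F n x ≤ ∫ x in Ioc (0:ℝ) 1, |ρ x| := fun n =>
    ell_key lam hlam c hc_cont ρ hρ V V' V'' hV hV'cont hV''int hAC hb0 hb1 heq _ (hεpos n)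
  have hlim : Filter.Tendsto (fun n => ∫ x in Ioc (0:ℝ) 1, F n x) Filter.atTop
      (nhds (∫ x in Ioc (0:ℝ) 1, c x * |V x|)) := by
    apply MeasureTheory.tendsto_integral_of_dominated_convergence
      (bound := fun x => |c x| * |V x|)
    · intro n
      exact ((hc_cont.mul (hVcont.mul
        ((continuous_ellPhi (hεpos n).ne').comp_continuousOn hVcont))).mono hIoc
        ).aestronglyMeasurable measurableSet_Ioc
    · exact ((hc_cont.abs.mul hVcont.abs).integrableOn_Icc).mono_set hIoc
    · intro n
      filter_upwards with x
      rw [hF, Real.norm_eq_abs, abs_mul, abs_mul]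
      apply mul_le_mul_of_nonneg_left _ (abs_nonneg (c x))
      calc |V x| * |ellPhi (1 / (↑n + 1)) (V x)| ≤ |V x| * 1 :=
            mul_le_mul_of_nonneg_left (abs_ellPhi_le (hεpos n).ne' _) (abs_nonneg _)
        _ = |V x| := mul_one _
    · filter_upwards with x
      rcases eq_or_ne (V x) 0 with hVx | hVx
      · have : ∀ n : ℕ, F n x = c x * |V x| := by
          intro n
          simp [hF, hVx, ellPhi_zero]
        simp_rw [this]
        exact tendsto_const_nhds
      · have habs : Real.sqrt ((V x) ^ 2) = |V x| := Real.sqrt_sq_eq_abs _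
        have hne : Real.sqrt ((V x) ^ 2 + 0 ^ 2) ≠ 0 := by
          rw [zero_pow two_ne_zero, add_zero, habs]
          exact abs_ne_zero.2 hVx
        have hcont : ContinuousAt
            (fun ε : ℝ => c x * (V x * (V x / Real.sqrt ((V x) ^ 2 + ε ^ 2)))) 0 := by
          apply continuousAt_const.mul
          apply continuousAt_const.mul
          apply continuousAt_const.div
          · exact Real.continuous_sqrt.continuousAt.comp
              (continuousAt_const.add ((continuous_pow 2).continuousAt))
          · exact hne
        have hval : c x * (V x * (V x / Real.sqrt ((V x) ^ 2 + 0 ^ 2))) = c x * |V x| := by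
          rw [zero_pow two_ne_zero, add_zero, habs]
          congr 1
          rw [mul_div_assoc', ← sq, div_eq_iff (abs_ne_zero.2 hVx), ← sq_abs, sq]
        have := (hcont.tendsto).comp tendsto_one_div_add_atTop_nhds_zero_nat
        rw [hval] at this
        exact this
  exact le_of_tendsto hlim (Filter.Eventually.of_forall hkey)
end

section
/- Let λ > 0, let c : [0,1] → ℝ be continuous with c(x) > 0 for all x ∈ [0,1], and let ρ : [0,1] → ℝ be Lebesgue integrable. Suppose V : [0,1] → ℝ is continuously differentiable with V(0) = V(1) = 0, and V' is absolutely continuous with a.e. derivative V'' ∈ L¹(0,1) satisfying −λ² V''(x) + c(x) V(x) = ρ(x) for a.e. x ∈ (0,1). Then ∫₀¹ |V''(x)| dx ≤ (2/λ²) ∫₀¹ |ρ(x)| dx and sup_{x ∈ [0,1]} |V'(x)| ≤ (2/λ²) ∫₀¹ |ρ(x)| dx. -/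
open MeasureTheory Set Filter Real Topology

noncomputable section

private def proj01 (x : ℝ) : ℝ := max 0 (min 1 x)

private lemma proj01_mem (x : ℝ) : proj01 x ∈ Icc (0:ℝ) 1 :=
  ⟨le_max_left _ _, max_le zero_le_one (min_le_left _ _)⟩

private lemma proj01_eq {x : ℝ} (hx : x ∈ Icc (0:ℝ) 1) : proj01 x = x := by
  simp only [proj01, min_eq_right hx.2, max_eq_right hx.1]

private lemma proj01_cont : Continuous proj01 :=
  continuous_const.max (continuous_const.min continuous_id)

/-- Fubini on the triangle `{(t,s) : 0 < t < s ≤ 1}`. -/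
private lemma key_swap (f : ℝ → ℝ) (hfm : StronglyMeasurable f)
    (hf : IntegrableOn f (Ioc 0 1)) (g : ℝ → ℝ) (hg : Continuous g) :
    ∫ t in Ioc (0:ℝ) 1, f t * (∫ s in Ioc t 1, g s)
      = ∫ s in Ioc (0:ℝ) 1, (∫ t in Ioc 0 s, f t) * g s := by
  set μ := volume.restrict (Ioc (0:ℝ) 1) with hμ
  set F : ℝ → ℝ → ℝ := fun t s => if t < s then f t * g s else 0 with hFdef
  have hFm : StronglyMeasurable (Function.uncurry F) := by
    apply Measurable.stronglyMeasurable
    exact Measurable.ite (measurableSet_lt measurable_fst measurable_snd)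
      ((hfm.measurable.comp measurable_fst).mul (hg.measurable.comp measurable_snd))
      measurable_const
  have hgi : IntegrableOn g (Ioc (0:ℝ) 1) := hg.integrableOn_Ioc
  have hprod : Integrable (fun p : ℝ × ℝ => f p.1 * g p.2) (μ.prod μ) := hf.mul_prod hgi
  have hFi : Integrable (Function.uncurry F) (μ.prod μ) := by
    refine hprod.norm.mono' hFm.aestronglyMeasurable (Eventually.of_forall ?_)
    rintro ⟨t, s⟩
    by_cases h : t < s <;> simp [Function.uncurry, F, h] <;> positivity
  have hswap := integral_integral_swap (f := F) hFi
  have hL : ∫ t, (∫ s, F t s ∂μ) ∂μ = ∫ t in Ioc (0:ℝ) 1, f t * (∫ s in Ioc t 1, g s) := by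
    refine setIntegral_congr_fun measurableSet_Ioc (fun t ht => ?_)
    have h1 : (fun s => F t s) = (Ioi t).indicator (fun s => f t * g s) := by
      funext s; by_cases h : t < s <;> simp [F, indicator, mem_Ioi, h]
    have h2 : Ioi t ∩ Ioc 0 1 = Ioc t 1 := by
      ext s
      simp only [mem_inter_iff, mem_Ioi, mem_Ioc]
      exact ⟨fun h => ⟨h.1, h.2.2⟩, fun h => ⟨h.1, lt_trans ht.1 h.1, h.2⟩⟩
    rw [h1, hμ, integral_indicator measurableSet_Ioi,
      Measure.restrict_restrict measurableSet_Ioi, h2, integral_const_mul]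
  have hR : ∫ s, (∫ t, F t s ∂μ) ∂μ = ∫ s in Ioc (0:ℝ) 1, (∫ t in Ioc 0 s, f t) * g s := by
    refine setIntegral_congr_fun measurableSet_Ioc (fun s hs => ?_)
    have h1 : (fun t => F t s) = (Iio s).indicator (fun t => f t * g s) := by
      funext t; by_cases h : t < s <;> simp [F, indicator, mem_Iio, h]
    have h2 : Iio s ∩ Ioc 0 1 = Ioo 0 s := by
      ext t
      simp only [mem_inter_iff, mem_Iio, mem_Ioc, mem_Ioo]
      exact ⟨fun h => ⟨h.2.1, h.1⟩, fun h => ⟨h.2, h.1, le_trans (le_of_lt h.2) hs.2⟩⟩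
    rw [h1, hμ, integral_indicator measurableSet_Iio,
      Measure.restrict_restrict measurableSet_Iio, h2, integral_mul_const,
      ← integral_Ioc_eq_integral_Ioo]
  rw [← hL, ← hR]
  exact hswap

/-- `W^{1,∞}` estimates `∫ |V''| ≤ (2/λ²) ∫ |ρ|` and `sup |V'| ≤ (2/λ²) ∫ |ρ|`
for a strong solution `V ∈ W^{2,1}(0,1)` of the linear elliptic problem
`-λ² V'' + c V = ρ` with homogeneous Dirichlet boundary conditions. -/
theorem linear_elliptic_W1inf_estimate (lam : ℝ) (hlam : 0 < lam)
    (c : ℝ → ℝ) (hc_cont : ContinuousOn c (Icc 0 1))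
    (hc_pos : ∀ x ∈ Icc (0:ℝ) 1, 0 < c x)
    (ρ : ℝ → ℝ) (hρ : IntegrableOn ρ (Icc 0 1))
    (V V' V'' : ℝ → ℝ)
    (hV : ∀ x ∈ Icc (0:ℝ) 1, HasDerivWithinAt V (V' x) (Icc 0 1) x)
    (hV'cont : ContinuousOn V' (Icc 0 1))
    (hV''int : IntegrableOn V'' (Icc 0 1))
    (hAC : ∀ x ∈ Icc (0:ℝ) 1, V' x = V' 0 + ∫ t in (0:ℝ)..x, V'' t)
    (hb0 : V 0 = 0) (hb1 : V 1 = 0)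
    (heq : ∀ᵐ x ∂(volume.restrict (Ioo (0:ℝ) 1)),
      -lam ^ 2 * V'' x + c x * V x = ρ x) :
    (∫ x in (0:ℝ)..1, |V'' x|) ≤ 2 / lam ^ 2 * ∫ x in (0:ℝ)..1, |ρ x| ∧
    ∀ x ∈ Icc (0:ℝ) 1, |V' x| ≤ 2 / lam ^ 2 * ∫ x in (0:ℝ)..1, |ρ x| := by
  have hlam2 : (0:ℝ) < lam ^ 2 := by positivity
  have hVcont : ContinuousOn V (Icc 0 1) := fun x hx => (hV x hx).continuousWithinAt
  -- measurable representative of V''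
  have hWm0 := hV''int.aestronglyMeasurable
  set W : ℝ → ℝ := hWm0.mk V'' with hWdef
  have hWsm : StronglyMeasurable W := hWm0.stronglyMeasurable_mk
  have hWeq : V'' =ᵐ[volume.restrict (Icc 0 1)] W := hWm0.ae_eq_mk
  have hsubIoc : Ioc (0:ℝ) 1 ⊆ Icc 0 1 := Ioc_subset_Icc_self
  have hsubIoo : Ioo (0:ℝ) 1 ⊆ Icc 0 1 := Ioo_subset_Icc_self
  have hWeq' : ∀ᵐ x ∂volume, x ∈ Icc (0:ℝ) 1 → V'' x = W x :=
    (ae_restrict_iff' measurableSet_Icc).mp hWeq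
  have hWint : IntegrableOn W (Icc 0 1) := hV''int.congr hWeq
  -- V' s - V' 0 = ∫_{(0,s]} W
  have hacW : ∀ s ∈ Icc (0:ℝ) 1, (∫ t in Ioc 0 s, W t) = V' s - V' 0 := by
    intro s hs
    have h1 : (∫ t in Ioc 0 s, W t) = ∫ t in Ioc 0 s, V'' t := by
      refine setIntegral_congr_ae measurableSet_Ioc ?_
      filter_upwards [hWeq'] with x hx hxs
      exact (hx ⟨le_of_lt hxs.1, le_trans hxs.2 hs.2⟩).symm
    rw [h1, ← intervalIntegral.integral_of_le hs.1]
    rw [hAC s hs]; ring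
  -- interval integrability of V'' on subintervals of [0,1]
  have hV''abs : IntegrableOn (fun x => |V'' x|) (Icc 0 1) := hV''int.abs
  have hii : ∀ a ∈ Icc (0:ℝ) 1, ∀ b ∈ Icc (0:ℝ) 1, IntervalIntegrable V'' volume a b :=
    fun a ha b hb => (hV''int.mono_set (uIcc_subset_Icc ha hb)).intervalIntegrable
  set J : ℝ := ∫ x in Ioo (0:ℝ) 1, |ρ x| with hJdef
  have hρIoo : IntegrableOn ρ (Ioo 0 1) := hρ.mono_set hsubIoo
  have hJeq : (∫ x in (0:ℝ)..1, |ρ x|) = J := by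
    rw [intervalIntegral.integral_of_le zero_le_one, integral_Ioc_eq_integral_Ioo]
  -- the approximate sign functions
  set β : ℕ → ℝ → ℝ := fun n v => 2 / π * arctan ((n:ℝ) * v) with hβdef
  set D : ℕ → ℝ → ℝ := fun n v => 2 / π * (1 / (1 + ((n:ℝ) * v) ^ 2) * (n:ℝ)) with hDdef
  have hβd : ∀ n v, HasDerivAt (β n) (D n v) v := by
    intro n v
    have h1 : HasDerivAt (fun v : ℝ => (n:ℝ) * v) ((n:ℝ)) v := by
      simpa using (hasDerivAt_id v).const_mul (n:ℝ)
    have h2 : HasDerivAt (fun v : ℝ => arctan ((n:ℝ) * v))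
        (1 / (1 + ((n:ℝ) * v) ^ 2) * (n:ℝ)) v := (Real.hasDerivAt_arctan _).comp v h1
    exact h2.const_mul (2 / π)
  have hD_nonneg : ∀ n v, 0 ≤ D n v := by
    intro n v
    have hπ : (0:ℝ) < π := Real.pi_pos
    have : (0:ℝ) < 1 + ((n:ℝ) * v) ^ 2 := by positivity
    positivity
  have hβ_le : ∀ n v, |β n v| ≤ 1 := by
    intro n v
    have hπ : (0:ℝ) < π := Real.pi_pos
    have h1 : |arctan ((n:ℝ) * v)| ≤ π / 2 :=
      abs_le.mpr ⟨le_of_lt (Real.neg_pi_div_two_lt_arctan _), le_of_lt (Real.arctan_lt_pi_div_two _)⟩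
    have h2 : |β n v| = 2 / π * |arctan ((n:ℝ) * v)| := by
      rw [hβdef]; rw [abs_mul, abs_of_pos (by positivity : (0:ℝ) < 2 / π)]
    rw [h2]
    calc 2 / π * |arctan ((n:ℝ) * v)| ≤ 2 / π * (π / 2) := by
          apply mul_le_mul_of_nonneg_left h1 (by positivity)
      _ = 1 := by field_simp
  have hβ0 : ∀ n, β n 0 = 0 := by intro n; simp [hβdef]
  -- u n and its derivative g n (globally defined)
  set u : ℕ → ℝ → ℝ := fun n x => β n (V (proj01 x)) with hudef
  set g : ℕ → ℝ → ℝ := fun n s => D n (V (proj01 s)) * V' (proj01 s) with hgdef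
  have hVP : Continuous fun x => V (proj01 x) :=
    hVcont.comp_continuous proj01_cont proj01_mem
  have hV'P : Continuous fun x => V' (proj01 x) :=
    hV'cont.comp_continuous proj01_cont proj01_mem
  have hgcont : ∀ n, Continuous (g n) := by
    intro n
    have h0 : Continuous (fun s => 1 + ((n:ℝ) * V (proj01 s)) ^ 2) :=
      continuous_const.add ((continuous_const.mul hVP).pow 2)
    have hne : ∀ s, 1 + ((n:ℝ) * V (proj01 s)) ^ 2 ≠ 0 := fun s => by positivity
    have h1 : Continuous (fun s => (1:ℝ) / (1 + ((n:ℝ) * V (proj01 s)) ^ 2)) :=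
      continuous_const.div h0 hne
    exact (continuous_const.mul (h1.mul continuous_const)).mul hV'P
  have hucont : ∀ n, Continuous (u n) := by
    intro n
    exact (continuous_const.mul ((Real.continuous_arctan).comp (continuous_const.mul hVP)))
  have hu_eq : ∀ n, ∀ x ∈ Icc (0:ℝ) 1, u n x = β n (V x) := by
    intro n x hx; rw [hudef]; simp [proj01_eq hx]
  have hu0 : ∀ n, u n 0 = 0 := by
    intro n
    rw [hu_eq n 0 (by norm_num), hb0, hβ0]
  have hu1 : ∀ n, u n 1 = 0 := by
    intro n
    rw [hu_eq n 1 (by norm_num), hb1, hβ0]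
  have hud : ∀ n, ∀ x ∈ Icc (0:ℝ) 1, HasDerivWithinAt (u n) (g n x) (Icc 0 1) x := by
    intro n x hx
    have h1 : HasDerivWithinAt (fun y => β n (V y)) (D n (V x) * V' x) (Icc 0 1) x :=
      (hβd n (V x)).comp_hasDerivWithinAt x (hV x hx)
    have h2 : g n x = D n (V x) * V' x := by rw [hgdef]; simp [proj01_eq hx]
    rw [h2]
    exact h1.congr (fun y hy => (hu_eq n y hy).symm ▸ rfl) ((hu_eq n x hx))
  -- FTC: u n t = -∫_{(t,1]} g n
  have hFTC : ∀ n, ∀ t ∈ Icc (0:ℝ) 1, (∫ s in Ioc t 1, g n s) = - u n t := by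
    intro n t ht
    have h1 : ∫ s in t..(1:ℝ), g n s = u n 1 - u n t := by
      apply intervalIntegral.integral_eq_sub_of_hasDerivAt_of_le ht.2
      · exact (hucont n).continuousOn
      · intro x hx
        have hx' : x ∈ Icc (0:ℝ) 1 := ⟨le_trans ht.1 (le_of_lt hx.1), le_of_lt hx.2⟩
        have hx'' : x ∈ Ioo (0:ℝ) 1 := ⟨lt_of_le_of_lt ht.1 hx.1, hx.2⟩
        exact (hud n x hx').hasDerivAt (Icc_mem_nhds hx''.1 hx''.2)
      · exact (hgcont n).intervalIntegrable _ _
    rw [← intervalIntegral.integral_of_le ht.2, h1, hu1 n]; ring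
  -- core inequality: ∫ V'' u_n ≤ 0
  have hcore : ∀ n, (∫ t in Ioo (0:ℝ) 1, V'' t * u n t) ≤ 0 := by
    intro n
    have hWIoc : IntegrableOn W (Ioc 0 1) := hWint.mono_set hsubIoc
    have e1 : (∫ t in Ioo (0:ℝ) 1, V'' t * u n t) = ∫ t in Ioc (0:ℝ) 1, W t * u n t := by
      rw [← integral_Ioc_eq_integral_Ioo]
      refine setIntegral_congr_ae measurableSet_Ioc ?_
      filter_upwards [hWeq'] with x hx hxs
      rw [hx (hsubIoc hxs)]
    have e2 : (∫ t in Ioc (0:ℝ) 1, W t * u n t)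
        = ∫ t in Ioc (0:ℝ) 1, W t * (-(∫ s in Ioc t 1, g n s)) := by
      refine setIntegral_congr_fun measurableSet_Ioc (fun t ht => ?_)
      rw [hFTC n t (hsubIoc ht)]; ring_nf
    have e3 : (∫ t in Ioc (0:ℝ) 1, W t * (-(∫ s in Ioc t 1, g n s)))
        = -∫ t in Ioc (0:ℝ) 1, W t * (∫ s in Ioc t 1, g n s) := by
      rw [← integral_neg]; congr 1; funext t; ring
    have e4 := key_swap W hWsm hWIoc (g n) (hgcont n)
    have e5 : (∫ s in Ioc (0:ℝ) 1, (∫ t in Ioc 0 s, W t) * g n s)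
        = ∫ s in Ioc (0:ℝ) 1, (V' s - V' 0) * g n s := by
      refine setIntegral_congr_fun measurableSet_Ioc (fun s hs => ?_)
      rw [hacW s (hsubIoc hs)]
    have hV'g_int : IntegrableOn (fun s => V' s * g n s) (Ioc 0 1) :=
      ((hV'cont.mul ((hgcont n).continuousOn)).integrableOn_Icc).mono_set hsubIoc
    have hg_int : IntegrableOn (g n) (Ioc 0 1) := (hgcont n).integrableOn_Ioc
    have e6 : (∫ s in Ioc (0:ℝ) 1, (V' s - V' 0) * g n s)
        = (∫ s in Ioc (0:ℝ) 1, V' s * g n s) - V' 0 * ∫ s in Ioc (0:ℝ) 1, g n s := by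
      rw [← integral_const_mul, ← integral_sub hV'g_int (hg_int.const_mul _)]
      congr 1; funext s; ring
    have e7 : (∫ s in Ioc (0:ℝ) 1, g n s) = 0 := by
      rw [hFTC n 0 (by norm_num), hu0 n, neg_zero]
    have e8 : 0 ≤ ∫ s in Ioc (0:ℝ) 1, V' s * g n s := by
      refine setIntegral_nonneg measurableSet_Ioc (fun s hs => ?_)
      have hs' : s ∈ Icc (0:ℝ) 1 := hsubIoc hs
      have : g n s = D n (V s) * V' s := by rw [hgdef]; simp [proj01_eq hs']
      rw [this]
      have : V' s * (D n (V s) * V' s) = D n (V s) * (V' s) ^ 2 := by ring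
      rw [this]
      exact mul_nonneg (hD_nonneg n _) (sq_nonneg _)
    rw [e1, e2, e3, e4, e5, e6, e7]
    simp only [mul_zero, sub_zero]
    linarith
  -- per-n inequality: ∫ c V β_n(V) ≤ J
  have hβVcont : ∀ n, ContinuousOn (fun s => c s * V s * β n (V s)) (Icc 0 1) := by
    intro n
    apply (hc_cont.mul hVcont).mul
    exact (continuous_const.mul (Real.continuous_arctan.comp (continuous_const.mul continuous_id))).comp_continuousOn hVcont
  have hn_bound : ∀ n, (∫ s in Ioo (0:ℝ) 1, c s * V s * β n (V s)) ≤ J := by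
    intro n
    have huV : ∀ᵐ x ∂(volume.restrict (Ioo (0:ℝ) 1)), x ∈ Ioo (0:ℝ) 1 :=
      ae_restrict_mem measurableSet_Ioo
    have hmain : ∀ᵐ x ∂(volume.restrict (Ioo (0:ℝ) 1)),
        c x * V x * β n (V x) = u n x * ρ x + lam ^ 2 * (V'' x * u n x) := by
      filter_upwards [heq, huV] with x hx hxI
      have hux : u n x = β n (V x) := hu_eq n x (hsubIoo hxI)
      rw [hux, ← hx]
      ring
    have hu_aesm : AEStronglyMeasurable (u n) (volume.restrict (Ioo (0:ℝ) 1)) :=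
      (hucont n).aestronglyMeasurable.restrict
    have h_uρ_int : Integrable (fun x => u n x * ρ x) (volume.restrict (Ioo (0:ℝ) 1)) := by
      refine Integrable.bdd_mul hρIoo hu_aesm (c := 1) (Eventually.of_forall fun x => ?_)
      simpa [hudef] using hβ_le n (V (proj01 x))
    have h_V''u_int : Integrable (fun x => V'' x * u n x) (volume.restrict (Ioo (0:ℝ) 1)) := by
      have h1 : Integrable (fun x => u n x * V'' x) (volume.restrict (Ioo (0:ℝ) 1)) := by
        refine Integrable.bdd_mul (hV''int.mono_set hsubIoo) hu_aesm (c := 1) (Eventually.of_forall fun x => ?_)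
        simpa [hudef] using hβ_le n (V (proj01 x))
      exact h1.congr (Eventually.of_forall (fun x => mul_comm _ _))
    have hsplit : (∫ s in Ioo (0:ℝ) 1, c s * V s * β n (V s))
        = (∫ s in Ioo (0:ℝ) 1, u n s * ρ s) + lam ^ 2 * ∫ s in Ioo (0:ℝ) 1, V'' s * u n s := by
      rw [← integral_const_mul, ← integral_add h_uρ_int (h_V''u_int.const_mul _)]
      exact integral_congr_ae hmain
    have h1 : (∫ s in Ioo (0:ℝ) 1, u n s * ρ s) ≤ J := by
      refine integral_mono_ae h_uρ_int hρIoo.abs (Eventually.of_forall (fun s => ?_))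
      calc u n s * ρ s ≤ |u n s * ρ s| := le_abs_self _
        _ = |u n s| * |ρ s| := abs_mul _ _
        _ ≤ 1 * |ρ s| := by
            apply mul_le_mul_of_nonneg_right _ (abs_nonneg _)
            simpa [hudef] using hβ_le n (V (proj01 s))
        _ = |ρ s| := one_mul _
    have h2 : lam ^ 2 * (∫ s in Ioo (0:ℝ) 1, V'' s * u n s) ≤ 0 := by
      have := hcore n
      nlinarith
    linarith [hsplit, h1, h2]
  -- dominated convergence: ∫ c V β_n(V) → ∫ c |V|
  have hclimit : Tendsto (fun n => ∫ s in Ioo (0:ℝ) 1, c s * V s * β n (V s)) atTop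
      (𝓝 (∫ s in Ioo (0:ℝ) 1, c s * |V s|)) := by
    apply tendsto_integral_of_dominated_convergence (fun s => |c s| * |V s|)
    · intro n
      exact ((hβVcont n).mono hsubIoo).aestronglyMeasurable measurableSet_Ioo
    · exact (((hc_cont.abs.mul hVcont.abs).integrableOn_Icc).mono_set hsubIoo)
    · intro n
      refine Eventually.of_forall (fun s => ?_)
      rw [Real.norm_eq_abs, abs_mul, abs_mul]
      calc |c s| * |V s| * |β n (V s)| ≤ |c s| * |V s| * 1 := by
            apply mul_le_mul_of_nonneg_left (hβ_le n _) (by positivity)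
        _ = |c s| * |V s| := mul_one _
    · filter_upwards [ae_restrict_mem measurableSet_Ioo] with s _
      rcases lt_trichotomy (V s) 0 with hv | hv | hv
      · have hlim : Tendsto (fun n : ℕ => arctan ((n:ℝ) * V s)) atTop (𝓝 (-(π/2))) := by
          apply (tendsto_nhds_of_tendsto_nhdsWithin Real.tendsto_arctan_atBot).comp
          exact (tendsto_mul_const_atBot_of_neg hv).mpr tendsto_natCast_atTop_atTop
        have := (tendsto_const_nhds (x := c s * V s)).mul
          ((tendsto_const_nhds (x := 2 / π)).mul hlim)
        convert this using 2
        have h2 : 2 / π * (-(π / 2)) = -1 := by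
          field_simp
          try ring
        rw [h2, abs_of_neg hv]; ring
      · have : (fun n : ℕ => c s * V s * β n (V s)) = fun _ => 0 := by
          funext n; rw [hv, hβ0]; ring
        rw [this, hv]
        simpa using tendsto_const_nhds
      · have hlim : Tendsto (fun n : ℕ => arctan ((n:ℝ) * V s)) atTop (𝓝 (π/2)) := by
          apply (tendsto_nhds_of_tendsto_nhdsWithin Real.tendsto_arctan_atTop).comp
          exact Tendsto.atTop_mul_const hv tendsto_natCast_atTop_atTop
        have := (tendsto_const_nhds (x := c s * V s)).mul
          ((tendsto_const_nhds (x := 2 / π)).mul hlim)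
        convert this using 2
        have h2 : 2 / π * (π / 2) = 1 := by
          field_simp
          try ring
        rw [h2, abs_of_pos hv]; ring
  have hA : (∫ s in Ioo (0:ℝ) 1, c s * |V s|) ≤ J :=
    le_of_tendsto hclimit (Eventually.of_forall hn_bound)
  -- first estimate
  have habs : ∀ᵐ x ∂(volume.restrict (Ioo (0:ℝ) 1)),
      lam ^ 2 * |V'' x| ≤ c x * |V x| + |ρ x| := by
    filter_upwards [heq, ae_restrict_mem measurableSet_Ioo] with x hx hxI
    have hcx : 0 < c x := hc_pos x (hsubIoo hxI)
    have h1 : lam ^ 2 * V'' x = c x * V x - ρ x := by linarith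
    have h2 : lam ^ 2 * |V'' x| = |lam ^ 2 * V'' x| := by
      rw [abs_mul, abs_of_pos hlam2]
    rw [h2, h1]
    calc |c x * V x - ρ x| ≤ |c x * V x| + |ρ x| := abs_sub _ _
      _ = c x * |V x| + |ρ x| := by rw [abs_mul, abs_of_pos hcx]
  have hcV_int : IntegrableOn (fun x => c x * |V x|) (Ioo 0 1) :=
    ((hc_cont.mul hVcont.abs).integrableOn_Icc).mono_set hsubIoo
  have hV''abs_int : IntegrableOn (fun x => |V'' x|) (Ioo 0 1) :=
    hV''abs.mono_set hsubIoo
  have hstep : lam ^ 2 * (∫ x in Ioo (0:ℝ) 1, |V'' x|) ≤ 2 * J := by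
    have h1 : lam ^ 2 * (∫ x in Ioo (0:ℝ) 1, |V'' x|)
        = ∫ x in Ioo (0:ℝ) 1, lam ^ 2 * |V'' x| := (integral_const_mul _ _).symm
    have h2 : (∫ x in Ioo (0:ℝ) 1, lam ^ 2 * |V'' x|)
        ≤ ∫ x in Ioo (0:ℝ) 1, (c x * |V x| + |ρ x|) :=
      integral_mono_ae (hV''abs_int.const_mul _) (hcV_int.add hρIoo.abs) habs
    have h3 : (∫ x in Ioo (0:ℝ) 1, (c x * |V x| + |ρ x|))
        = (∫ x in Ioo (0:ℝ) 1, c x * |V x|) + J := integral_add hcV_int hρIoo.abs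
    linarith
  have hfirst : (∫ x in (0:ℝ)..1, |V'' x|) ≤ 2 / lam ^ 2 * ∫ x in (0:ℝ)..1, |ρ x| := by
    rw [hJeq, intervalIntegral.integral_of_le zero_le_one, integral_Ioc_eq_integral_Ioo]
    rw [div_mul_eq_mul_div, le_div_iff₀ hlam2] at *
    nlinarith [hstep]
  constructor
  · exact hfirst
  -- second estimate via Rolle
  · obtain ⟨ξ, hξI, hξ⟩ := exists_hasDerivAt_eq_zero (f := V) (f' := V') zero_lt_one hVcont
      (hb0.trans hb1.symm)
      (fun x hx => (hV x (hsubIoo hx)).hasDerivAt (Icc_mem_nhds hx.1 hx.2))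
    have hξI' : ξ ∈ Icc (0:ℝ) 1 := hsubIoo hξI
    intro x hx
    have hVx : V' x = ∫ t in ξ..x, V'' t := by
      have h1 := hAC x hx
      have h2 := hAC ξ hξI'
      have h3 : (∫ t in (0:ℝ)..x, V'' t) - ∫ t in (0:ℝ)..ξ, V'' t = ∫ t in ξ..x, V'' t :=
        intervalIntegral.integral_interval_sub_left (hii 0 (by norm_num) x hx)
          (hii 0 (by norm_num) ξ hξI')
      rw [hξ] at h2
      have : V' 0 = -∫ t in (0:ℝ)..ξ, V'' t := by linarith
      rw [h1, this, ← h3]; ring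
    rw [hVx]
    calc |∫ t in ξ..x, V'' t| ≤ ∫ t in Set.uIoc ξ x, |V'' t| := by
          simpa only [Real.norm_eq_abs] using
            intervalIntegral.norm_integral_le_integral_norm_uIoc (f := V'') (a := ξ) (b := x)
      _ ≤ ∫ t in Ioc (0:ℝ) 1, |V'' t| := by
          apply setIntegral_mono_set (hV''abs.mono_set hsubIoc)
            (Eventually.of_forall (fun t => abs_nonneg _))
          apply HasSubset.Subset.eventuallyLE
          rw [uIoc]
          apply Ioc_subset_Ioc
          · exact le_min hξI.1.le hx.1
          · exact max_le hξI'.2 hx.2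
      _ = ∫ t in (0:ℝ)..1, |V'' t| := (intervalIntegral.integral_of_le zero_le_one).symm
      _ ≤ 2 / lam ^ 2 * ∫ x in (0:ℝ)..1, |ρ x| := hfirst

end
end

section
/- Let λ > 0, let n_e : ℝ → ℝ be continuously differentiable with n_e'(s) > 0 for all s ∈ ℝ, let φ : [0,1] → ℝ be continuous, and let ρ : [0,1] → ℝ be Lebesgue integrable. Suppose W : [0,1] → ℝ is continuously differentiable with W(0) = W(1) = 0, and W' is absolutely continuous with a.e. derivative W'' ∈ L¹(0,1) satisfying −λ² W''(x) + n_e(φ(x) + W(x)) − n_e(φ(x)) = ρ(x) for a.e. x ∈ (0,1). Then ∫₀¹ |n_e(φ(x) + W(x)) − n_e(φ(x))| dx ≤ ∫₀¹ |ρ(x)| dx, λ² ∫₀¹ |W''(x)| dx ≤ 2 ∫₀¹ |ρ(x)| dx, and λ² sup_{x ∈ [0,1]} |W'(x)| ≤ 2 ∫₀¹ |ρ(x)| dx. -/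
open MeasureTheory Set intervalIntegral

lemma fubini_triangle (f g : ℝ → ℝ) (hf : IntegrableOn f (Icc 0 1))
    (hg : IntegrableOn g (Icc 0 1)) :
    ∫ x in Ioc (0:ℝ) 1, f x * (∫ t in Ioc x 1, g t) =
      ∫ t in Ioc (0:ℝ) 1, (∫ x in Ioc 0 t, f x) * g t := by
  set μ := volume.restrict (Ioc (0:ℝ) 1) with hμ
  have hf1 : Integrable f μ := hf.mono_set Ioc_subset_Icc_self
  have hg1 : Integrable g μ := hg.mono_set Ioc_subset_Icc_self
  have hmeas : MeasurableSet {p : ℝ × ℝ | p.1 < p.2} :=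
    measurableSet_lt measurable_fst measurable_snd
  set F : ℝ → ℝ → ℝ := fun x t => Set.indicator {p : ℝ × ℝ | p.1 < p.2}
    (fun p : ℝ × ℝ => f p.1 * g p.2) (x, t) with hF
  have hFint : Integrable (Function.uncurry F) (μ.prod μ) := by
    have : Function.uncurry F = Set.indicator {p : ℝ × ℝ | p.1 < p.2}
        (fun p : ℝ × ℝ => f p.1 * g p.2) := by
      ext p; cases p; rfl
    rw [this]
    exact (hf1.mul_prod hg1).indicator hmeas
  have swap := MeasureTheory.integral_integral_swap hFint
  -- LHS of swap
  have hL : (∫ x, ∫ t, F x t ∂μ ∂μ) = ∫ x in Ioc (0:ℝ) 1, f x * (∫ t in Ioc x 1, g t) := by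
    refine setIntegral_congr_fun measurableSet_Ioc (fun x hx => ?_)
    have h1 : (fun t => F x t) = Set.indicator (Ioi x) (fun t => f x * g t) := by
      ext t
      by_cases h : x < t
      · simp [hF, Set.indicator_of_mem, h, Set.mem_Ioi.mpr h]
      · simp [hF, Set.indicator_of_notMem, h, fun hh => h (Set.mem_Ioi.mp hh)]
    rw [h1, hμ, MeasureTheory.integral_indicator measurableSet_Ioi, Measure.restrict_restrict measurableSet_Ioi]
    have h2 : Ioi x ∩ Ioc 0 1 = Ioc x 1 := by
      ext t; simp only [mem_inter_iff, mem_Ioi, mem_Ioc]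
      constructor
      · rintro ⟨h1', h2', h3'⟩; exact ⟨h1', h3'⟩
      · rintro ⟨h1', h2'⟩; exact ⟨h1', lt_trans hx.1 h1', h2'⟩
    rw [h2, MeasureTheory.integral_const_mul]
  -- RHS of swap
  have hR : (∫ t, ∫ x, F x t ∂μ ∂μ) = ∫ t in Ioc (0:ℝ) 1, (∫ x in Ioc 0 t, f x) * g t := by
    refine setIntegral_congr_fun measurableSet_Ioc (fun t ht => ?_)
    have h1 : (fun x => F x t) = Set.indicator (Iio t) (fun x => f x * g t) := by
      ext x
      by_cases h : x < t
      · simp [hF, Set.indicator_of_mem, h, Set.mem_Iio.mpr h]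
      · simp [hF, Set.indicator_of_notMem, h, fun hh => h (Set.mem_Iio.mp hh)]
    rw [h1, hμ, MeasureTheory.integral_indicator measurableSet_Iio, Measure.restrict_restrict measurableSet_Iio]
    have h2 : Iio t ∩ Ioc 0 1 = Ioo 0 t := by
      ext x; simp only [mem_inter_iff, mem_Iio, mem_Ioc, mem_Ioo]
      constructor
      · rintro ⟨h1', h2', h3'⟩; exact ⟨h2', h1'⟩
      · rintro ⟨h1', h2'⟩; exact ⟨h2', h1', le_trans h2'.le ht.2⟩
    rw [h2, ← integral_Ioc_eq_integral_Ioo, MeasureTheory.integral_mul_const]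
  rw [hL, hR] at swap
  exact swap
lemma ibp_aux (W' W'' v v' : ℝ → ℝ)
    (hW'cont : ContinuousOn W' (Icc 0 1))
    (hW''int : IntegrableOn W'' (Icc 0 1))
    (hAC : ∀ x ∈ Icc (0:ℝ) 1, W' x = W' 0 + ∫ t in (0:ℝ)..x, W'' t)
    (hv : ∀ x ∈ Icc (0:ℝ) 1, HasDerivWithinAt v (v' x) (Icc 0 1) x)
    (hv' : ContinuousOn v' (Icc 0 1)) :
    ∫ x in Ioc (0:ℝ) 1, W'' x * v x =
      W' 1 * v 1 - W' 0 * v 0 - ∫ x in Ioc (0:ℝ) 1, W' x * v' x := by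
  have hvc : ContinuousOn v (Icc 0 1) := fun x hx => (hv x hx).continuousWithinAt
  -- FTC for v
  have hftc : ∀ x ∈ Icc (0:ℝ) 1, (∫ t in x..1, v' t) = v 1 - v x := by
    intro x hx
    refine integral_eq_sub_of_hasDeriv_right_of_le hx.2
      (hvc.mono (Icc_subset_Icc hx.1 le_rfl)) (fun y hy => ?_) ?_
    · have hy' : y ∈ Icc (0:ℝ) 1 := ⟨le_of_lt (lt_of_le_of_lt hx.1 hy.1), hy.2.le⟩
      exact ((hv y hy').hasDerivAt (Icc_mem_nhds (lt_of_le_of_lt hx.1 hy.1) hy.2)).hasDerivWithinAt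
    · apply ContinuousOn.intervalIntegrable
      rw [uIcc_of_le hx.2]
      exact hv'.mono (Icc_subset_Icc hx.1 le_rfl)
  have hW''01 : (∫ t in (0:ℝ)..1, W'' t) = W' 1 - W' 0 := by
    have := hAC 1 (by norm_num); linarith
  set B : ℝ → ℝ := fun x => ∫ t in x..1, v' t with hB
  have hBcont : ContinuousOn B (Icc 0 1) := by
    have := continuousOn_primitive_interval_left (f := v') (a := (0:ℝ)) (b := 1) (μ := volume) ?_
    · rwa [uIcc_of_le zero_le_one] at this
    · rw [uIcc_of_le zero_le_one]; exact hv'.integrableOn_Icc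
  obtain ⟨M, hM⟩ : ∃ M, ∀ x ∈ Icc (0:ℝ) 1, ‖B x‖ ≤ M := by
    rcases (isCompact_Icc.image_of_continuousOn hBcont).isBounded.exists_norm_le with ⟨M, hM⟩
    exact ⟨M, fun x hx => hM _ (mem_image_of_mem _ hx)⟩
  set μ := volume.restrict (Ioc (0:ℝ) 1) with hμ
  have hW''1 : Integrable W'' μ := hW''int.mono_set Ioc_subset_Icc_self
  have hBm : AEStronglyMeasurable B μ :=
    (hBcont.mono Ioc_subset_Icc_self).aestronglyMeasurable measurableSet_Ioc
  have hI2 : Integrable (fun x => W'' x * B x) μ := by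
    refine Integrable.mono' (g := fun x => |W'' x| * M) (hW''1.abs.mul_const M)
      (hW''1.aestronglyMeasurable.mul hBm) ?_
    rw [hμ, ae_restrict_iff' measurableSet_Ioc]
    filter_upwards with x hx
    have := hM x (Ioc_subset_Icc_self hx)
    calc ‖W'' x * B x‖ = |W'' x| * ‖B x‖ := by rw [norm_mul]; rfl
    _ ≤ |W'' x| * M := by
        exact mul_le_mul_of_nonneg_left this (abs_nonneg _)
  -- rewrite integrand
  have step1 : ∫ x in Ioc (0:ℝ) 1, W'' x * v x
      = ∫ x in Ioc (0:ℝ) 1, (W'' x * v 1 - W'' x * B x) := by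
    refine setIntegral_congr_fun measurableSet_Ioc (fun x hx => ?_)
    have := hftc x (Ioc_subset_Icc_self hx)
    simp only [hB]
    rw [this]; ring
  have step2 : ∫ x in Ioc (0:ℝ) 1, (W'' x * v 1 - W'' x * B x)
      = (∫ x in Ioc (0:ℝ) 1, W'' x) * v 1 - ∫ x in Ioc (0:ℝ) 1, W'' x * B x := by
    rw [integral_sub (hW''1.mul_const _) hI2, MeasureTheory.integral_mul_const]
  -- Fubini
  have step3 : ∫ x in Ioc (0:ℝ) 1, W'' x * B x
      = ∫ t in Ioc (0:ℝ) 1, (∫ x in Ioc 0 t, W'' x) * v' t := by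
    rw [← fubini_triangle W'' v' hW''int (hv'.integrableOn_Icc)]
    refine setIntegral_congr_fun measurableSet_Ioc (fun x hx => ?_)
    simp only [hB]
    rw [integral_of_le hx.2]
  have step4 : ∫ t in Ioc (0:ℝ) 1, (∫ x in Ioc 0 t, W'' x) * v' t
      = ∫ t in Ioc (0:ℝ) 1, (W' t - W' 0) * v' t := by
    refine setIntegral_congr_fun measurableSet_Ioc (fun t ht => ?_)
    have := hAC t (Ioc_subset_Icc_self ht)
    rw [← integral_of_le ht.1.le]
    rw [this]; ring_nf
  have hW'v' : Integrable (fun t => W' t * v' t) μ :=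
    ((hW'cont.mul hv').integrableOn_Icc).mono_set Ioc_subset_Icc_self
  have hv'int : Integrable v' μ := hv'.integrableOn_Icc.mono_set Ioc_subset_Icc_self
  have hv'01 : (∫ t in Ioc (0:ℝ) 1, v' t) = v 1 - v 0 := by
    rw [← integral_of_le zero_le_one]
    exact hftc 0 ⟨le_rfl, zero_le_one⟩
  have step5 : (∫ t in Ioc (0:ℝ) 1, (W' t - W' 0) * v' t)
      = (∫ t in Ioc (0:ℝ) 1, W' t * v' t) - W' 0 * (v 1 - v 0) := by
    have : (∫ t in Ioc (0:ℝ) 1, (W' t - W' 0) * v' t)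
        = ∫ t in Ioc (0:ℝ) 1, (W' t * v' t - W' 0 * v' t) := by
      refine setIntegral_congr_fun measurableSet_Ioc (fun t ht => ?_); ring
    rw [this, integral_sub hW'v' (hv'int.const_mul _), MeasureTheory.integral_const_mul, hv'01]
  have hIocW'' : (∫ x in Ioc (0:ℝ) 1, W'' x) = W' 1 - W' 0 := by
    rw [← integral_of_le zero_le_one]; exact hW''01
  rw [show (∫ x in Ioc (0:ℝ) 1, W'' x * v x ∂volume) = ∫ x, W'' x * v x ∂μ from rfl] at step1
  rw [step1, step2, step3, step4, step5, hIocW'']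
  ring

lemma kato_aux (W W' W'' : ℝ → ℝ)
    (hW : ∀ x ∈ Icc (0:ℝ) 1, HasDerivWithinAt W (W' x) (Icc 0 1) x)
    (hW'cont : ContinuousOn W' (Icc 0 1))
    (hW''int : IntegrableOn W'' (Icc 0 1))
    (hAC : ∀ x ∈ Icc (0:ℝ) 1, W' x = W' 0 + ∫ t in (0:ℝ)..x, W'' t)
    (hb0 : W 0 = 0) (hb1 : W 1 = 0) (c : ℝ) (hc : 0 < c) :
    ∫ x in Ioc (0:ℝ) 1, W'' x * ((2 / Real.pi) * Real.arctan (c * W x)) ≤ 0 := by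
  set v : ℝ → ℝ := fun x => (2 / Real.pi) * Real.arctan (c * W x) with hv
  set v' : ℝ → ℝ := fun x =>
    (2 / Real.pi) * ((1 / (1 + (c * W x) ^ 2)) * (c * W' x)) with hv'
  have hWc : ContinuousOn W (Icc 0 1) := fun x hx => (hW x hx).continuousWithinAt
  have hvd : ∀ x ∈ Icc (0:ℝ) 1, HasDerivWithinAt v (v' x) (Icc 0 1) x := by
    intro x hx
    exact ((Real.hasDerivAt_arctan (c * W x)).comp_hasDerivWithinAt x
      ((hW x hx).const_mul c)).const_mul (2 / Real.pi)
  have hv'c : ContinuousOn v' (Icc 0 1) := by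
    apply ContinuousOn.mul continuousOn_const
    apply ContinuousOn.mul
    · apply ContinuousOn.div continuousOn_const
      · exact (continuousOn_const.add (((continuousOn_const.mul hWc)).pow 2))
      · intro x hx
        positivity
    · exact continuousOn_const.mul hW'cont
  have h := ibp_aux W' W'' v v' hW'cont hW''int hAC hvd hv'c
  have hv0 : v 0 = 0 := by simp [hv, hb0]
  have hv1 : v 1 = 0 := by simp [hv, hb1]
  rw [h, hv0, hv1]
  simp only [mul_zero, zero_sub, sub_zero]
  have : (0:ℝ) ≤ ∫ x in Ioc (0:ℝ) 1, W' x * v' x := by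
    apply setIntegral_nonneg measurableSet_Ioc
    intro x _
    have hpi : (0:ℝ) < Real.pi := Real.pi_pos
    have h1 : (0:ℝ) < 1 + (c * W x) ^ 2 := by positivity
    have : W' x * v' x = (2 / Real.pi) * (c * (W' x) ^ 2 / (1 + (c * W x) ^ 2)) := by
      simp only [hv']; ring
    rw [this]
    positivity
  linarith

/-- `L¹` and `W^{1,∞}` estimates for a strong solution `W ∈ W^{2,1}(0,1)` of the
nonlinear Poisson problem `-λ² W'' + n_e(φ + W) - n_e(φ) = ρ` with homogeneous
Dirichlet boundary conditions:
`∫ |n_e(φ+W) - n_e(φ)| ≤ ∫ |ρ|`, `λ² ∫ |W''| ≤ 2 ∫ |ρ|` and `λ² sup |W'| ≤ 2 ∫ |ρ|`. -/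
theorem nonlinear_poisson_L1_W1inf_estimates (lam : ℝ) (hlam : 0 < lam)
    (ne : ℝ → ℝ) (hne : ContDiff ℝ 1 ne) (hne' : ∀ s : ℝ, 0 < deriv ne s)
    (phi : ℝ → ℝ) (hphi : ContinuousOn phi (Icc 0 1))
    (ρ : ℝ → ℝ) (hρ : IntegrableOn ρ (Icc 0 1))
    (W W' W'' : ℝ → ℝ)
    (hW : ∀ x ∈ Icc (0:ℝ) 1, HasDerivWithinAt W (W' x) (Icc 0 1) x)
    (hW'cont : ContinuousOn W' (Icc 0 1))
    (hW''int : IntegrableOn W'' (Icc 0 1))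
    (hAC : ∀ x ∈ Icc (0:ℝ) 1, W' x = W' 0 + ∫ t in (0:ℝ)..x, W'' t)
    (hb0 : W 0 = 0) (hb1 : W 1 = 0)
    (heq : ∀ᵐ x ∂(volume.restrict (Ioo (0:ℝ) 1)),
      -lam ^ 2 * W'' x + ne (phi x + W x) - ne (phi x) = ρ x) :
    (∫ x in (0:ℝ)..1, |ne (phi x + W x) - ne (phi x)|) ≤ (∫ x in (0:ℝ)..1, |ρ x|) ∧
    lam ^ 2 * ∫ x in (0:ℝ)..1, |W'' x| ≤ 2 * ∫ x in (0:ℝ)..1, |ρ x| ∧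
    ∀ x ∈ Icc (0:ℝ) 1, lam ^ 2 * |W' x| ≤ 2 * ∫ x in (0:ℝ)..1, |ρ x| := by
  have hpi : (0:ℝ) < Real.pi := Real.pi_pos
  set μ := volume.restrict (Ioc (0:ℝ) 1) with hμ
  have hμeq : volume.restrict (Ioo (0:ℝ) 1) = μ := by
    rw [hμ, Measure.restrict_congr_set Ioo_ae_eq_Ioc]
  set g : ℝ → ℝ := fun x => ne (phi x + W x) - ne (phi x) with hg
  have hWc : ContinuousOn W (Icc 0 1) := fun x hx => (hW x hx).continuousWithinAt
  have hgc : ContinuousOn g (Icc 0 1) := by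
    apply ContinuousOn.sub
    · exact hne.continuous.comp_continuousOn (hphi.add hWc)
    · exact hne.continuous.comp_continuousOn hphi
  have hmono : StrictMono ne := strictMono_of_deriv_pos hne'
  have hgW : ∀ x, (W x = 0 → g x = 0) ∧ (0 < W x → 0 < g x) ∧ (W x < 0 → g x < 0) := by
    intro x
    refine ⟨fun h => by simp [hg, h], fun h => ?_, fun h => ?_⟩
    · have := hmono (show phi x < phi x + W x by linarith)
      simp only [hg]; linarith
    · have := hmono (show phi x + W x < phi x by linarith)
      simp only [hg]; linarith
  -- the a.e. equation on Ioc
  have heq' : ∀ᵐ x ∂μ, g x = ρ x + lam ^ 2 * W'' x := by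
    rw [← hμeq]
    filter_upwards [heq] with x hx
    simp only [hg]; linarith
  have hρμ : Integrable ρ μ := hρ.mono_set Ioc_subset_Icc_self
  have hgμ : Integrable g μ := hgc.integrableOn_Icc.mono_set Ioc_subset_Icc_self
  have hW''μ : Integrable W'' μ := hW''int.mono_set Ioc_subset_Icc_self
  have habsρ : Integrable (fun x => |ρ x|) μ := hρμ.abs
  -- approximating multipliers
  set v : ℕ → ℝ → ℝ := fun n x => (2 / Real.pi) * Real.arctan ((n + 1 : ℝ) * W x) with hvdef
  have hvb : ∀ n x, |v n x| ≤ 1 := by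
    intro n x
    have h1 := Real.arctan_lt_pi_div_two ((n + 1 : ℝ) * W x)
    have h2 := Real.neg_pi_div_two_lt_arctan ((n + 1 : ℝ) * W x)
    have hpi : (0:ℝ) < Real.pi := Real.pi_pos
    calc |v n x| = 2 / Real.pi * |Real.arctan ((n + 1 : ℝ) * W x)| := by
          rw [abs_mul, abs_of_pos (by positivity : (0:ℝ) < 2 / Real.pi)]
    _ ≤ 2 / Real.pi * (Real.pi / 2) := by
          apply mul_le_mul_of_nonneg_left _ (by positivity)
          rw [abs_le]; constructor <;> linarith
    _ = 1 := by field_simp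
  have hvmeas : ∀ n, AEStronglyMeasurable (v n) μ := by
    intro n
    have : ContinuousOn (v n) (Icc 0 1) :=
      continuousOn_const.mul (Real.continuous_arctan.comp_continuousOn
        (continuousOn_const.mul hWc))
    exact (this.mono Ioc_subset_Icc_self).aestronglyMeasurable measurableSet_Ioc
  have hgv_int : ∀ n, Integrable (fun x => g x * v n x) μ := by
    intro n
    have h := Integrable.bdd_mul (c := 1) hgμ (hvmeas n)
      (by filter_upwards with x using by simpa [Real.norm_eq_abs] using hvb n x)
    exact h.congr (by filter_upwards with x using mul_comm _ _)
  have hρv_int : ∀ n, Integrable (fun x => ρ x * v n x) μ := by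
    intro n
    have h := Integrable.bdd_mul (c := 1) hρμ (hvmeas n)
      (by filter_upwards with x using by simpa [Real.norm_eq_abs] using hvb n x)
    exact h.congr (by filter_upwards with x using mul_comm _ _)
  have hW''v_int : ∀ n, Integrable (fun x => W'' x * v n x) μ := by
    intro n
    have h := Integrable.bdd_mul (c := 1) hW''μ (hvmeas n)
      (by filter_upwards with x using by simpa [Real.norm_eq_abs] using hvb n x)
    exact h.congr (by filter_upwards with x using mul_comm _ _)
  have hkato : ∀ n : ℕ, (∫ x, W'' x * v n x ∂μ) ≤ 0 := by
    intro n
    exact kato_aux W W' W'' hW hW'cont hW''int hAC hb0 hb1 ((n:ℝ) + 1) (by positivity)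
  have key : ∀ n, (∫ x, g x * v n x ∂μ) ≤ ∫ x, |ρ x| ∂μ := by
    intro n
    have e1 : (∫ x, g x * v n x ∂μ)
        = ∫ x, (ρ x * v n x + lam ^ 2 * (W'' x * v n x)) ∂μ := by
      apply MeasureTheory.integral_congr_ae
      filter_upwards [heq'] with x hx
      rw [hx]; ring
    rw [e1, integral_add (hρv_int n) ((hW''v_int n).const_mul _),
      MeasureTheory.integral_const_mul]
    have h2 : (∫ x, ρ x * v n x ∂μ) ≤ ∫ x, |ρ x| ∂μ := by
      apply integral_mono (hρv_int n) habsρ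
      intro x
      calc ρ x * v n x ≤ |ρ x * v n x| := le_abs_self _
      _ = |ρ x| * |v n x| := abs_mul _ _
      _ ≤ |ρ x| * 1 := mul_le_mul_of_nonneg_left (hvb n x) (abs_nonneg _)
      _ = |ρ x| := mul_one _
    nlinarith [hkato n, sq_nonneg lam, h2]
  have hDCT : Filter.Tendsto (fun n => ∫ x, g x * v n x ∂μ)
      Filter.atTop (nhds (∫ x, |g x| ∂μ)) := by
    apply tendsto_integral_of_dominated_convergence (bound := fun x => |g x|)
    · intro n; exact (hgv_int n).aestronglyMeasurable
    · exact hgμ.abs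
    · intro n
      filter_upwards with x
      rw [Real.norm_eq_abs, abs_mul]
      calc |g x| * |v n x| ≤ |g x| * 1 :=
            mul_le_mul_of_nonneg_left (hvb n x) (abs_nonneg _)
      _ = |g x| := mul_one _
    · filter_upwards with x
      rcases lt_trichotomy (W x) 0 with h | h | h
      · have hgx := (hgW x).2.2 h
        have hlim : Filter.Tendsto (fun n : ℕ => ((n:ℝ) + 1) * W x) Filter.atTop
            Filter.atBot := by
          apply Filter.Tendsto.atTop_mul_const_of_neg h
          exact Filter.tendsto_atTop_add_const_right _ _ tendsto_natCast_atTop_atTop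
        have harc : Filter.Tendsto (fun n : ℕ => Real.arctan (((n:ℝ) + 1) * W x))
            Filter.atTop (nhds (-(Real.pi / 2))) :=
          (tendsto_nhds_of_tendsto_nhdsWithin Real.tendsto_arctan_atBot).comp hlim
        have h3 : g x * (2 / Real.pi * (-(Real.pi / 2))) = |g x| := by
          have hone : 2 / Real.pi * (-(Real.pi / 2)) = -1 := by
            field_simp; try ring
          rw [hone, abs_of_neg hgx]; ring
        have h4 := ((harc.const_mul (2 / Real.pi)).const_mul (g x))
        rw [← h3]
        exact h4
      · have hgx := (hgW x).1 h
        have : (fun n : ℕ => g x * v n x) = fun _ => |g x| := by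
          funext n; simp [hgx]
        rw [this]
        exact tendsto_const_nhds
      · have hgx := (hgW x).2.1 h
        have hlim : Filter.Tendsto (fun n : ℕ => ((n:ℝ) + 1) * W x) Filter.atTop
            Filter.atTop := by
          apply Filter.Tendsto.atTop_mul_const h
          exact Filter.tendsto_atTop_add_const_right _ _ tendsto_natCast_atTop_atTop
        have harc : Filter.Tendsto (fun n : ℕ => Real.arctan (((n:ℝ) + 1) * W x))
            Filter.atTop (nhds (Real.pi / 2)) :=
          (tendsto_nhds_of_tendsto_nhdsWithin Real.tendsto_arctan_atTop).comp hlim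
        have h3 : g x * (2 / Real.pi * (Real.pi / 2)) = |g x| := by
          have hone : 2 / Real.pi * (Real.pi / 2) = 1 := by
            field_simp; try ring
          rw [hone, abs_of_pos hgx]; ring
        have h4 := ((harc.const_mul (2 / Real.pi)).const_mul (g x))
        rw [← h3]
        exact h4
  have claim1 : (∫ x, |g x| ∂μ) ≤ ∫ x, |ρ x| ∂μ :=
    le_of_tendsto hDCT (Filter.Eventually.of_forall key)
  have habsg : Integrable (fun x => |g x|) μ := hgμ.abs
  have habsW'' : Integrable (fun x => |W'' x|) μ := hW''μ.abs
  have claim2 : lam ^ 2 * (∫ x, |W'' x| ∂μ) ≤ 2 * ∫ x, |ρ x| ∂μ := by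
    have hae : ∀ᵐ x ∂μ, lam ^ 2 * |W'' x| ≤ |g x| + |ρ x| := by
      filter_upwards [heq'] with x hx
      have h1 : lam ^ 2 * W'' x = g x - ρ x := by linarith
      calc lam ^ 2 * |W'' x| = |lam ^ 2 * W'' x| := by
            rw [abs_mul, abs_of_pos (pow_pos hlam 2)]
      _ = |g x - ρ x| := by rw [h1]
      _ ≤ |g x| + |ρ x| := abs_sub _ _
    have h5 : (∫ x, lam ^ 2 * |W'' x| ∂μ) ≤ ∫ x, (|g x| + |ρ x|) ∂μ :=
      integral_mono_ae (habsW''.const_mul _) (habsg.add habsρ) hae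
    rw [MeasureTheory.integral_const_mul, integral_add habsg habsρ] at h5
    linarith
  refine ⟨?_, ?_, ?_⟩
  · rw [integral_of_le zero_le_one, integral_of_le zero_le_one]
    exact claim1
  · rw [integral_of_le zero_le_one, integral_of_le zero_le_one]
    exact claim2
  · -- Rolle + fundamental theorem
    have hWIoo : ∀ x ∈ Ioo (0:ℝ) 1, HasDerivAt W (W' x) x := fun x hx =>
      (hW x (Ioo_subset_Icc_self hx)).hasDerivAt (Icc_mem_nhds hx.1 hx.2)
    obtain ⟨c, hc, hc0⟩ := exists_hasDerivAt_eq_zero zero_lt_one hWc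
      (hb0.trans hb1.symm) hWIoo
    intro x hx
    have hint : ∀ y ∈ Icc (0:ℝ) 1, IntervalIntegrable W'' volume 0 y := by
      intro y hy
      apply IntegrableOn.intervalIntegrable
      apply hW''int.mono_set
      rw [uIcc_of_le hy.1]
      exact Icc_subset_Icc le_rfl hy.2
    have h1 : W' x = ∫ t in c..x, W'' t := by
      have hA := hAC x hx
      have hB := hAC c (Ioo_subset_Icc_self hc)
      have hsub := intervalIntegral.integral_interval_sub_left
        (hint x hx) (hint c (Ioo_subset_Icc_self hc))
      rw [hc0] at hB
      linarith
    have h2 : |W' x| ≤ ∫ t in Set.uIoc c x, |W'' t| := by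
      rw [h1]
      simpa [Real.norm_eq_abs] using
        intervalIntegral.norm_integral_le_integral_norm_uIoc (f := W'') (a := c) (b := x)
          (μ := volume)
    have hsub2 : Set.uIoc c x ⊆ Ioc (0:ℝ) 1 := by
      rw [uIoc]
      apply Ioc_subset_Ioc
      · exact le_min hc.1.le hx.1
      · exact max_le hc.2.le hx.2
    have h3 : (∫ t in Set.uIoc c x, |W'' t|) ≤ ∫ t in Ioc (0:ℝ) 1, |W'' t| := by
      apply setIntegral_mono_set habsW''
      · filter_upwards with t using abs_nonneg _
      · exact HasSubset.Subset.eventuallyLE hsub2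
    have h4 : lam ^ 2 * |W' x| ≤ lam ^ 2 * ∫ t in Ioc (0:ℝ) 1, |W'' t| := by
      apply mul_le_mul_of_nonneg_left _ (sq_nonneg lam)
      linarith
    calc lam ^ 2 * |W' x| ≤ lam ^ 2 * ∫ t in Ioc (0:ℝ) 1, |W'' t| := h4
    _ ≤ 2 * ∫ t in Ioc (0:ℝ) 1, |ρ t| := claim2
    _ = 2 * ∫ t in (0:ℝ)..1, |ρ t| := by rw [integral_of_le zero_le_one]
end

section
/- Let λ > 0, let n_e : ℝ → ℝ be continuously differentiable with n_e'(s) > 0 for all s ∈ ℝ, let φ : [0,1] → ℝ be continuous, and let ρ : [0,1] → ℝ be measurable and essentially bounded. Suppose W : [0,1] → ℝ is continuously differentiable with W(0) = W(1) = 0, and W' is absolutely continuous with a.e. derivative W'' satisfying −λ² W''(x) + n_e(φ(x) + W(x)) − n_e(φ(x)) = ρ(x) for a.e. x ∈ (0,1). Set a = sup_{x ∈ [0,1]} |φ(x)| + (2/λ²)‖ρ‖_{L^∞(0,1)} and M = sup_{s ∈ [−a,a]} n_e'(s). Then sup_{x ∈ [0,1]} |n_e(φ(x) + W(x)) − n_e(φ(x))|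 ≤ (2M/λ²)‖ρ‖_{L^∞(0,1)} and λ² esssup_{x ∈ (0,1)} |W''(x)| ≤ (2M/λ² + 1)‖ρ‖_{L^∞(0,1)}. -/
open MeasureTheory Set

/-- Maximum-principle upper bound: if `W(0) = W(1) = 0` and `W'' ≥ -c` a.e. on the
set where `W > 0`, then `W ≤ c/2` on `[0,1]`. -/
lemma key_upper_bound (c : ℝ) (hc : 0 ≤ c) (W W' W'' : ℝ → ℝ)
    (hW : ∀ x ∈ Icc (0:ℝ) 1, HasDerivWithinAt W (W' x) (Icc 0 1) x)
    (hW'cont : ContinuousOn W' (Icc 0 1))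
    (hW''int : IntegrableOn W'' (Icc 0 1))
    (hAC : ∀ x ∈ Icc (0:ℝ) 1, W' x = W' 0 + ∫ t in (0:ℝ)..x, W'' t)
    (hb0 : W 0 = 0) (hb1 : W 1 = 0)
    (hQ : ∀ᵐ x ∂(volume.restrict (Ioo (0:ℝ) 1)), 0 < W x → -c ≤ W'' x) :
    ∀ x ∈ Icc (0:ℝ) 1, W x ≤ c / 2 := by
  have hWc : ContinuousOn W (Icc 0 1) := fun x hx => (hW x hx).continuousWithinAt
  set V : ℝ → ℝ := fun x => W x - c / 2 * (x * (1 - x)) with hV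
  have hVc : ContinuousOn V (Icc 0 1) := by
    apply hWc.sub
    fun_prop
  obtain ⟨x₀, hx₀, hmax⟩ := isCompact_Icc.exists_isMaxOn (nonempty_Icc.2 zero_le_one) hVc
  -- reduce to V x₀ ≤ 0
  suffices hV0 : V x₀ ≤ 0 by
    intro x hx
    have h1 := hmax hx
    simp only [Set.mem_setOf_eq] at h1
    have hxx : x * (1 - x) ≤ 1 := by nlinarith [hx.1, hx.2]
    have hxx0 : 0 ≤ x * (1 - x) := by nlinarith [hx.1, hx.2]
    simp only [hV] at h1 hV0 ⊢
    nlinarith [hc]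
  by_contra hpos
  push_neg at hpos
  have hV00 : V 0 = 0 := by simp [hV, hb0]
  have hV10 : V 1 = 0 := by simp [hV, hb1]
  have hx₀0 : x₀ ≠ 0 := by rintro rfl; rw [hV00] at hpos; linarith
  have hx₀1 : x₀ ≠ 1 := by rintro rfl; rw [hV10] at hpos; linarith
  have hx₀Ioo : x₀ ∈ Ioo (0:ℝ) 1 := ⟨lt_of_le_of_ne hx₀.1 (Ne.symm hx₀0),
    lt_of_le_of_ne hx₀.2 hx₀1⟩
  -- derivative of V
  set V' : ℝ → ℝ := fun x => W' x - c / 2 * (1 - 2 * x) with hV'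
  have hIccnhds : Icc (0:ℝ) 1 ∈ nhds x₀ := Icc_mem_nhds hx₀Ioo.1 hx₀Ioo.2
  have hderivV : ∀ x ∈ Ioo (0:ℝ) 1, HasDerivAt V (V' x) x := by
    intro x hx
    have hWd : HasDerivAt W (W' x) x :=
      (hW x (Ioo_subset_Icc_self hx)).hasDerivAt (Icc_mem_nhds hx.1 hx.2)
    have hp : HasDerivAt (fun y : ℝ => c / 2 * (y * (1 - y))) (c / 2 * (1 - 2 * x)) x := by
      have : HasDerivAt (fun y : ℝ => c / 2 * (y * (1 - y)))
          (c / 2 * ((1 : ℝ) * (1 - x) + x * (0 - 1))) x :=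
        ((hasDerivAt_id x).mul ((hasDerivAt_const x (1:ℝ)).sub (hasDerivAt_id x))).const_mul _
      convert this using 1; ring
    exact hWd.sub hp
  -- V' x₀ = 0
  have hV'0 : V' x₀ = 0 := by
    have : IsLocalMax V x₀ := hmax.isLocalMax hIccnhds
    exact this.hasDerivAt_eq_zero (hderivV x₀ hx₀Ioo)
  have hWx₀pos : 0 < W x₀ := by
    have h1 : 0 ≤ x₀ * (1 - x₀) := by nlinarith [hx₀Ioo.1, hx₀Ioo.2]
    have h2 : 0 ≤ c / 2 * (x₀ * (1 - x₀)) := mul_nonneg (by linarith) h1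
    simp only [hV] at hpos; linarith
  -- the last zero of W before x₀
  obtain ⟨α, hαmem, hαub⟩ : ∃ α, α ∈ (Icc 0 x₀ ∩ W ⁻¹' Iic 0) ∧
      ∀ y ∈ (Icc 0 x₀ ∩ W ⁻¹' Iic 0), y ≤ α := by
    have hSne : (Icc 0 x₀ ∩ W ⁻¹' Iic 0).Nonempty :=
      ⟨0, ⟨le_rfl, le_of_lt hx₀Ioo.1⟩, by simp [hb0]⟩
    have hSbdd : BddAbove (Icc 0 x₀ ∩ W ⁻¹' Iic 0) := ⟨x₀, fun y hy => hy.1.2⟩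
    have hSclosed : IsClosed (Icc 0 x₀ ∩ W ⁻¹' Iic 0) :=
      (hWc.mono (Icc_subset_Icc le_rfl hx₀.2)).preimage_isClosed_of_isClosed
        isClosed_Icc isClosed_Iic
    exact ⟨_, hSclosed.csSup_mem hSne hSbdd, fun y hy => le_csSup hSbdd hy⟩
  have hα0 : 0 ≤ α := hαmem.1.1
  have hαx₀ : α < x₀ := lt_of_le_of_ne hαmem.1.2 (by
    rintro rfl; exact absurd hWx₀pos (not_lt.2 hαmem.2))
  have hWpos : ∀ t, α < t → t < x₀ → 0 < W t := by
    intro t ht1 ht2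
    by_contra h
    push_neg at h
    exact absurd (hαub t ⟨⟨le_trans hα0 ht1.le, ht2.le⟩, h⟩) (not_le.2 ht1)
  -- a.e. statement over volume
  have hQvol : ∀ᵐ t ∂(volume : Measure ℝ),
      (t ∈ Ioo (0:ℝ) 1 → (0 < W t → -c ≤ W'' t)) ∧ t ≠ α ∧ t ≠ x₀ := by
    refine ((ae_restrict_iff' measurableSet_Ioo).mp hQ).and (Filter.Eventually.and ?_ ?_) <;>
    · rw [ae_iff]
      simp only [ne_eq, not_not, setOf_eq_eq_singleton]
      exact measure_singleton _
  -- W' monotonicity estimate: V' x ≤ 0 on [α, x₀]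
  have hint : ∀ x ∈ Icc α x₀, IntervalIntegrable W'' volume x x₀ := by
    intro x hx
    apply hW''int.mono_set _ |>.intervalIntegrable
    rw [uIcc_of_le hx.2]
    exact Icc_subset_Icc (le_trans hα0 hx.1) hx₀.2
  have hV'le : ∀ x ∈ Icc α x₀, V' x ≤ 0 := by
    intro x hx
    have hxx₀ : x ≤ x₀ := hx.2
    have hintx := hint x hx
    have hnn : 0 ≤ ∫ t in x..x₀, (W'' t + c) := by
      apply intervalIntegral.integral_nonneg_of_ae_restrict hxx₀
      apply (ae_restrict_iff' measurableSet_Icc).mpr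
      filter_upwards [hQvol] with t ht htmem
      have ht1 : α < t := lt_of_le_of_ne (le_trans hx.1 htmem.1) (Ne.symm ht.2.1)
      have ht2 : t < x₀ := lt_of_le_of_ne htmem.2 ht.2.2
      have : -c ≤ W'' t := ht.1 ⟨lt_of_le_of_lt hα0 ht1, lt_of_lt_of_le ht2 hx₀.2⟩
        (hWpos t ht1 ht2)
      simp only [Pi.zero_apply]
      linarith
    have hsplit : (∫ t in x..x₀, (W'' t + c)) = (∫ t in x..x₀, W'' t) + c * (x₀ - x) := by
      rw [intervalIntegral.integral_add hintx intervalIntegrable_const]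
      simp [mul_comm]
    have hWdiff : W' x₀ - W' x = ∫ t in x..x₀, W'' t := by
      have h1 := hAC x₀ hx₀
      have h2 := hAC x ⟨le_trans hα0 hx.1, le_trans hx.2 hx₀.2⟩
      have hadd : (∫ t in (0:ℝ)..x, W'' t) + (∫ t in x..x₀, W'' t)
          = ∫ t in (0:ℝ)..x₀, W'' t := by
        apply intervalIntegral.integral_add_adjacent_intervals
        · apply hW''int.mono_set _ |>.intervalIntegrable
          rw [uIcc_of_le (le_trans hα0 hx.1)]
          exact Icc_subset_Icc le_rfl (le_trans hx.2 hx₀.2)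
        · exact hintx
      rw [h1, h2]; linarith
    have hkey : 0 ≤ (W' x₀ - W' x) + c * (x₀ - x) := by
      rw [hWdiff]; linarith [hnn, hsplit]
    simp only [hV'] at hV'0 ⊢
    nlinarith [hkey, hV'0]
  -- FTC : V x₀ - V α = ∫ V' ≤ 0
  have hVint : IntervalIntegrable V' volume α x₀ := by
    apply ContinuousOn.intervalIntegrable
    rw [uIcc_of_le hαx₀.le]
    apply (hW'cont.mono (Icc_subset_Icc hα0 hx₀.2)).sub
    fun_prop
  have hFTC : (∫ t in α..x₀, V' t) = V x₀ - V α := by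
    apply intervalIntegral.integral_eq_sub_of_hasDeriv_right_of_le hαx₀.le
      (hVc.mono (Icc_subset_Icc hα0 hx₀.2)) _ hVint
    intro t ht
    exact (hderivV t ⟨lt_of_le_of_lt hα0 ht.1, lt_of_lt_of_le ht.2 hx₀.2⟩).hasDerivWithinAt
  have hle : (∫ t in α..x₀, V' t) ≤ 0 := by
    rw [intervalIntegral.integral_of_le hαx₀.le]
    apply integral_nonpos_of_ae
    apply (ae_restrict_iff' measurableSet_Ioc).mpr
    exact ae_of_all _ fun t ht => hV'le t (Ioc_subset_Icc_self ht)
  have hVα : V α ≤ 0 := by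
    have h1 : 0 ≤ α * (1 - α) := by
      have := hαmem.1.2
      nlinarith [hα0, hx₀.2]
    have h2 : 0 ≤ c / 2 * (α * (1 - α)) := mul_nonneg (by linarith) h1
    have h3 : W α ≤ 0 := hαmem.2
    simp only [hV]; linarith
  have : V x₀ ≤ V α := by linarith [hFTC ▸ hle]
  linarith

/-- `L^∞` estimates for a strong solution `W` of the nonlinear Poisson problem
`-λ² W'' + n_e(φ + W) - n_e(φ) = ρ` on `(0,1)` with homogeneous Dirichlet boundary
conditions, when the source `ρ` is measurable and essentially bounded.
With `R = ‖ρ‖_{L^∞(0,1)}`, `a = sup_{[0,1]} |φ| + (2/λ²) R` and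
`M = sup_{[-a,a]} n_e'`, one has `sup |n_e(φ+W) - n_e(φ)| ≤ (2M/λ²) R` and
`λ² esssup |W''| ≤ (2M/λ² + 1) R`. -/
theorem nonlinear_poisson_Linf_estimates (lam : ℝ) (hlam : 0 < lam)
    (ne : ℝ → ℝ) (hne : ContDiff ℝ 1 ne) (hne' : ∀ s : ℝ, 0 < deriv ne s)
    (phi : ℝ → ℝ) (hphi : ContinuousOn phi (Icc 0 1))
    (ρ : ℝ → ℝ) (hρ_meas : Measurable ρ)
    (hρ_bdd : MemLp ρ ⊤ (volume.restrict (Ioo (0:ℝ) 1)))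
    (W W' W'' : ℝ → ℝ)
    (hW : ∀ x ∈ Icc (0:ℝ) 1, HasDerivWithinAt W (W' x) (Icc 0 1) x)
    (hW'cont : ContinuousOn W' (Icc 0 1))
    (hW''int : IntegrableOn W'' (Icc 0 1))
    (hAC : ∀ x ∈ Icc (0:ℝ) 1, W' x = W' 0 + ∫ t in (0:ℝ)..x, W'' t)
    (hb0 : W 0 = 0) (hb1 : W 1 = 0)
    (heq : ∀ᵐ x ∂(volume.restrict (Ioo (0:ℝ) 1)),
      -lam ^ 2 * W'' x + ne (phi x + W x) - ne (phi x) = ρ x)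
    (R a M : ℝ)
    (hR : R = essSup (fun x => |ρ x|) (volume.restrict (Ioo (0:ℝ) 1)))
    (ha : a = sSup ((fun x => |phi x|) '' Icc (0:ℝ) 1) + 2 / lam ^ 2 * R)
    (hM : M = sSup ((fun s => deriv ne s) '' Icc (-a) a)) :
    (∀ x ∈ Icc (0:ℝ) 1, |ne (phi x + W x) - ne (phi x)| ≤ 2 * M / lam ^ 2 * R) ∧
    lam ^ 2 * essSup (fun x => |W'' x|) (volume.restrict (Ioo (0:ℝ) 1)) ≤
      (2 * M / lam ^ 2 + 1) * R := by
  set μ := volume.restrict (Ioo (0:ℝ) 1) with hμdef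
  have hlam2 : (0:ℝ) < lam ^ 2 := by positivity
  have hμ : μ ≠ 0 := by
    rw [hμdef, ← Measure.measure_univ_ne_zero, Measure.restrict_apply_univ, Real.volume_Ioo]
    simp
  have : (ae μ).NeBot := ae_neBot.mpr hμ
  -- ρ is a.e. bounded by R
  have hbdd : Filter.IsBoundedUnder (· ≤ ·) (ae μ) fun x => |ρ x| := by
    have h1 : eLpNormEssSup ρ μ < ⊤ := by
      have := hρ_bdd.2
      rwa [eLpNorm_exponent_top] at this
    refine ⟨(eLpNormEssSup ρ μ).toReal, ?_⟩
    rw [Filter.eventually_map]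
    filter_upwards [ae_le_eLpNormEssSup (f := ρ) (μ := μ)] with x hx
    have := ENNReal.toReal_mono h1.ne hx
    simpa [Real.norm_eq_abs] using this
  have hRae : ∀ᵐ x ∂μ, |ρ x| ≤ R := hR ▸ ae_le_essSup hbdd
  have hR0 : 0 ≤ R := by
    obtain ⟨x, hx⟩ := hRae.exists
    exact le_trans (abs_nonneg _) hx
  set c : ℝ := R / lam ^ 2 with hcdef
  have hc : 0 ≤ c := div_nonneg hR0 hlam2.le
  have hc' : lam ^ 2 * c = R := by
    rw [hcdef, mul_div_assoc', mul_div_right_comm, div_self hlam2.ne', one_mul]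
  -- monotonicity of ne
  have hmono : StrictMono ne := strictMono_of_deriv_pos hne'
  -- a.e. bounds on W''
  have hQpos : ∀ᵐ x ∂μ, 0 < W x → -c ≤ W'' x := by
    filter_upwards [heq, hRae] with x hx hxR hWpos
    have h1 : ne (phi x) ≤ ne (phi x + W x) := (hmono.le_iff_le).2 (by linarith)
    have h2 : -R ≤ lam ^ 2 * W'' x := by nlinarith [abs_le.1 hxR]
    nlinarith [hc']
  have hQneg : ∀ᵐ x ∂μ, 0 < -W x → -c ≤ -W'' x := by
    filter_upwards [heq, hRae] with x hx hxR hWneg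
    have h1 : ne (phi x + W x) ≤ ne (phi x) := (hmono.le_iff_le).2 (by linarith)
    have h2 : lam ^ 2 * W'' x ≤ R := by nlinarith [abs_le.1 hxR]
    nlinarith [hc']
  -- |W| ≤ c/2 on [0,1]
  have hWle : ∀ x ∈ Icc (0:ℝ) 1, W x ≤ c / 2 :=
    key_upper_bound c hc W W' W'' hW hW'cont hW''int hAC hb0 hb1 hQpos
  have hWge : ∀ x ∈ Icc (0:ℝ) 1, -W x ≤ c / 2 := by
    refine key_upper_bound c hc (fun x => -W x) (fun x => -W' x) (fun x => -W'' x)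
      (fun x hx => (hW x hx).neg) hW'cont.neg hW''int.neg ?_ (by simp [hb0]) (by simp [hb1])
      hQneg
    intro x hx
    show -W' x = -W' 0 + ∫ t in (0:ℝ)..x, -W'' t
    rw [intervalIntegral.integral_neg, hAC x hx]
    ring
  have habs : ∀ x ∈ Icc (0:ℝ) 1, |W x| ≤ c / 2 := fun x hx =>
    abs_le.2 ⟨by linarith [hWge x hx], hWle x hx⟩
  -- bound on phi
  set P : ℝ := sSup ((fun x => |phi x|) '' Icc (0:ℝ) 1) with hPdef
  have hPb : ∀ x ∈ Icc (0:ℝ) 1, |phi x| ≤ P := by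
    intro x hx
    exact le_csSup (isCompact_Icc.bddAbove_image (continuous_abs.comp_continuousOn hphi))
      ⟨x, hx, rfl⟩
  have hP0 : 0 ≤ P := le_trans (abs_nonneg _) (hPb 0 ⟨le_rfl, zero_le_one⟩)
  have ha' : a = P + 2 * c := by rw [ha, hcdef]; ring
  have ha0 : 0 ≤ a := by rw [ha']; linarith
  -- memberships in [-a, a]
  have hmem1 : ∀ x ∈ Icc (0:ℝ) 1, phi x ∈ Icc (-a) a := by
    intro x hx
    have := abs_le.1 (hPb x hx)
    constructor <;> [linarith [this.1]; linarith [this.2]]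
  have hmem2 : ∀ x ∈ Icc (0:ℝ) 1, phi x + W x ∈ Icc (-a) a := by
    intro x hx
    have h1 := abs_le.1 (hPb x hx)
    have h2 := abs_le.1 (habs x hx)
    constructor <;> [linarith [h1.1, h2.1]; linarith [h1.2, h2.2]]
  -- bound on deriv ne
  have hMb : ∀ s ∈ Icc (-a) a, deriv ne s ≤ M := by
    intro s hs
    rw [hM]
    exact le_csSup (isCompact_Icc.bddAbove_image
      ((hne.continuous_deriv le_rfl).continuousOn)) ⟨s, hs, rfl⟩
  have hM0 : 0 ≤ M :=
    le_of_lt (lt_of_lt_of_le (hne' 0) (hMb 0 ⟨by linarith, ha0⟩))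
  -- first claim
  have claim1 : ∀ x ∈ Icc (0:ℝ) 1, |ne (phi x + W x) - ne (phi x)| ≤ 2 * M / lam ^ 2 * R := by
    intro x hx
    have hlip := Convex.norm_image_sub_le_of_norm_hasDerivWithin_le
      (f := ne) (f' := deriv ne) (C := M)
      (fun y _ => ((hne.differentiable one_ne_zero) y).hasDerivAt.hasDerivWithinAt)
      (fun y hy => by rw [Real.norm_eq_abs, abs_of_pos (hne' y)]; exact hMb y hy)
      (convex_Icc (-a) a) (hmem1 x hx) (hmem2 x hx)
    rw [Real.norm_eq_abs, Real.norm_eq_abs] at hlip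
    have h1 : |phi x + W x - phi x| = |W x| := by ring_nf
    rw [h1] at hlip
    have h2 : M * |W x| ≤ M * (c / 2) := mul_le_mul_of_nonneg_left (habs x hx) hM0
    have h3 : 2 * M / lam ^ 2 * R = 2 * M * c := by rw [hcdef]; ring
    rw [h3]
    calc |ne (phi x + W x) - ne (phi x)| ≤ M * |W x| := hlip
      _ ≤ M * (c / 2) := h2
      _ ≤ 2 * M * c := by nlinarith [hM0, hc]
  refine ⟨claim1, ?_⟩
  -- second claim
  set K : ℝ := (2 * M / lam ^ 2 + 1) * R / lam ^ 2 with hKdef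
  have hKae : ∀ᵐ x ∂μ, |W'' x| ≤ K := by
    filter_upwards [heq, hRae, ae_restrict_mem measurableSet_Ioo] with x hx hxR hxm
    have hdiff := claim1 x (Ioo_subset_Icc_self hxm)
    have h1 : lam ^ 2 * W'' x = ne (phi x + W x) - ne (phi x) - ρ x := by linarith
    have h2 : |lam ^ 2 * W'' x| ≤ (2 * M / lam ^ 2 + 1) * R := by
      rw [h1]
      calc |ne (phi x + W x) - ne (phi x) - ρ x|
          ≤ |ne (phi x + W x) - ne (phi x)| + |ρ x| := abs_sub _ _
        _ ≤ 2 * M / lam ^ 2 * R + R := add_le_add hdiff hxR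
        _ = (2 * M / lam ^ 2 + 1) * R := by ring
    rw [abs_mul, abs_of_pos hlam2] at h2
    rw [hKdef, le_div_iff₀ hlam2]
    linarith
  have hcob : Filter.IsCoboundedUnder (· ≤ ·) (ae μ) fun x => |W'' x| := by
    apply Filter.IsBoundedUnder.isCoboundedUnder_le (α := ℝ)
    exact ⟨0, Filter.eventually_map.2 (ae_of_all _ fun x => abs_nonneg _)⟩
  have hess : essSup (fun x => |W'' x|) μ ≤ K := Filter.limsup_le_of_le hcob hKae
  calc lam ^ 2 * essSup (fun x => |W'' x|) μ ≤ lam ^ 2 * K :=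
        mul_le_mul_of_nonneg_left hess hlam2.le
    _ = (2 * M / lam ^ 2 + 1) * R := by rw [hKdef]; field_simp
end

section
/- Let φ : ℝ → ℝ be continuously differentiable and suppose there are constants 0 < c₁ ≤ c₂ with c₁ ≤ −φ'(x) ≤ c₂ for all x ∈ (0,1). Let (X,V) : ℝ → ℝ² be a solution of the ODE system X'(s) = V(s), V'(s) = −φ'(X(s)), and let t ∈ ℝ. Then there exists s₁ < t with X(s₁) ∉ (0,1) and there exists s₂ > t with X(s₂) ∉ (0,1); in particular, the incoming time inf{s ≤ t : X(s') ∈ (0,1) for all s' ∈ (s,t)} is finite and the outgoing time sup{s ≥ t : X(s') ∈ (0,1) for all s' ∈ (t,s)} is finite. -/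
open Set

lemma mvt_lower {f f' : ℝ → ℝ} {a b m : ℝ} (hab : a < b)
    (hd : ∀ x, HasDerivAt f (f' x) x) (hm : ∀ x ∈ Ioo a b, m ≤ f' x) :
    m * (b - a) ≤ f b - f a := by
  obtain ⟨c, hc, hceq⟩ := exists_hasDerivAt_eq_slope f f' hab
    (fun x _ => (hd x).continuousAt.continuousWithinAt) (fun x _ => hd x)
  have h1 := hm c hc
  rw [hceq] at h1
  have hba : 0 < b - a := sub_pos.mpr hab
  rw [le_div_iff₀ hba] at h1
  linarith

lemma forward_exit (c₁ t : ℝ) (hc₁ : 0 < c₁) (X V A : ℝ → ℝ)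
    (hX : ∀ s, HasDerivAt X (V s) s) (hV : ∀ s, HasDerivAt V (A s) s)
    (hA : ∀ s, X s ∈ Ioo (0:ℝ) 1 → c₁ ≤ A s) :
    ∃ s₂ > t, X s₂ ∉ Ioo (0:ℝ) 1 := by
  by_contra h
  push_neg at h
  have hVmono : ∀ p q : ℝ, t < p → p < q → c₁ * (q - p) ≤ V q - V p := by
    intro p q hp hpq
    exact mvt_lower hpq hV (fun x hx => hA x (h x (hp.trans hx.1)))
  set a := t + 1 with ha
  have hta : t < a := by simp [ha]
  set b := a + (1 + |V a|) / c₁ with hb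
  have hab : a < b := by
    have : 0 < (1 + |V a|) / c₁ := div_pos (by positivity) hc₁
    simp [hb]; linarith
  have htb : t < b := hta.trans hab
  have hVb : 1 ≤ V b := by
    have h1 := hVmono a b hta hab
    have h2 : c₁ * (b - a) = 1 + |V a| := by
      have : b - a = (1 + |V a|) / c₁ := by simp [hb]
      rw [this]; field_simp
    have h3 : 0 ≤ V a + |V a| := by
      have := neg_abs_le (V a); linarith
    linarith
  have hXlow : 1 * ((b + 2) - b) ≤ X (b + 2) - X b := by
    apply mvt_lower (by linarith) hX
    intro x hx
    have h1 := hVmono b x htb hx.1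
    nlinarith [sub_pos.mpr hx.1]
  have h1 := h b htb
  have h2 := h (b + 2) (by linarith)
  simp only [mem_Ioo] at h1 h2
  linarith [h1.1, h2.2]

/-- Finiteness of the exit times: if the electric field `-φ'` is uniformly positive on `(0,1)`,
then any characteristic `X' = V`, `V' = -φ'(X)` leaves the slab `(0,1)` both backward and
forward in time; in particular the incoming time `inf {s ≤ t : X(s') ∈ (0,1) ∀ s' ∈ (s,t)}`
and the outgoing time `sup {s ≥ t : X(s') ∈ (0,1) ∀ s' ∈ (t,s)}` are finite. -/
theorem exit_times_finite (phi : ℝ → ℝ) (hphi : ContDiff ℝ 1 phi)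
    (c₁ c₂ : ℝ) (hc₁ : 0 < c₁) (hc₁₂ : c₁ ≤ c₂)
    (hfield : ∀ x ∈ Ioo (0:ℝ) 1, c₁ ≤ -deriv phi x ∧ -deriv phi x ≤ c₂)
    (X V : ℝ → ℝ)
    (hX : ∀ s, HasDerivAt X (V s) s)
    (hV : ∀ s, HasDerivAt V (-deriv phi (X s)) s)
    (t : ℝ) :
    (∃ s₁ < t, X s₁ ∉ Ioo (0:ℝ) 1) ∧ (∃ s₂ > t, X s₂ ∉ Ioo (0:ℝ) 1) ∧
    BddBelow {s : ℝ | s ≤ t ∧ ∀ s' ∈ Ioo s t, X s' ∈ Ioo (0:ℝ) 1} ∧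
    BddAbove {s : ℝ | t ≤ s ∧ ∀ s' ∈ Ioo t s, X s' ∈ Ioo (0:ℝ) 1} := by
  -- forward exit
  have hfwd : ∃ s₂ > t, X s₂ ∉ Ioo (0:ℝ) 1 :=
    forward_exit c₁ t hc₁ X V (fun s => -deriv phi (X s)) hX hV
      (fun s hs => (hfield _ hs).1)
  -- backward exit via time reflection
  have hbwd : ∃ s₁ < t, X s₁ ∉ Ioo (0:ℝ) 1 := by
    set Y : ℝ → ℝ := fun s => X (2 * t - s) with hY
    set W : ℝ → ℝ := fun s => -V (2 * t - s) with hW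
    have hY' : ∀ s, HasDerivAt Y (W s) s := by
      intro s
      have h1 : HasDerivAt (fun s : ℝ => 2 * t - s) (-1) s := by
        exact (hasDerivAt_id' s).const_sub (2 * t)
      have := (hX (2 * t - s)).comp s h1
      exact this.congr_deriv (by simp [hW])
    have hW' : ∀ s, HasDerivAt W (-deriv phi (Y s)) s := by
      intro s
      have h1 : HasDerivAt (fun s : ℝ => 2 * t - s) (-1) s := by
        exact (hasDerivAt_id' s).const_sub (2 * t)
      have h2 := ((hV (2 * t - s)).comp s h1).neg
      exact h2.congr_deriv (by simp [hY])
    obtain ⟨s, hs, hsn⟩ := forward_exit c₁ t hc₁ Y W (fun s => -deriv phi (Y s)) hY' hW'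
      (fun s hs => (hfield _ hs).1)
    exact ⟨2 * t - s, by linarith, hsn⟩
  obtain ⟨s₁, hs₁t, hs₁⟩ := hbwd
  obtain ⟨s₂, hs₂t, hs₂⟩ := hfwd
  refine ⟨⟨s₁, hs₁t, hs₁⟩, ⟨s₂, hs₂t, hs₂⟩, ⟨s₁, ?_⟩, ⟨s₂, ?_⟩⟩
  · rintro s ⟨hst, hmem⟩
    by_contra hlt
    push_neg at hlt
    exact hs₁ (hmem s₁ ⟨hlt, hs₁t⟩)
  · rintro s ⟨hts, hmem⟩
    by_contra hlt
    push_neg at hlt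
    exact hs₂ (hmem s₂ ⟨hs₂t, hlt⟩)
end

section
/- Let φ : ℝ → ℝ be continuously differentiable with φ(x) ≤ 0 for every x ∈ [0,1], and let r ≥ 0. Let (X,V) be a solution of X'(s) = V(s), V'(s) = −φ'(X(s)) on an interval J, with X(s) ∈ (0,1) for all s ∈ J, and suppose that for some t₀ ∈ J one has V(t₀) > √(r² − 2φ(X(t₀))). Then for every s ∈ J one has V(s) > √(r² − 2φ(X(s))). -/
open Set

/-- Invariance of the region `D⁺_r = {(x,v) : v > √(r² - 2φ(x))}` under the characteristic
flow `X' = V`, `V' = -φ'(X)`, for a nonpositive potential `φ` on `[0,1]`: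
if the characteristic stays in the slab on an interval `J` and lies in `D⁺_r`
at some time `t₀ ∈ J`, then it lies in `D⁺_r` at every time of `J`. -/
theorem Dr_invariant (phi : ℝ → ℝ) (hphi : ContDiff ℝ 1 phi)
    (hneg : ∀ x ∈ Icc (0:ℝ) 1, phi x ≤ 0)
    (r : ℝ) (hr : 0 ≤ r)
    (J : Set ℝ) (hJ : J.OrdConnected)
    (X V : ℝ → ℝ)
    (hX : ∀ s ∈ J, HasDerivWithinAt X (V s) J s)
    (hV : ∀ s ∈ J, HasDerivWithinAt V (-deriv phi (X s)) J s)
    (hin : ∀ s ∈ J, X s ∈ Ioo (0:ℝ) 1)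
    (t₀ : ℝ) (ht₀ : t₀ ∈ J)
    (hv₀ : V t₀ > Real.sqrt (r ^ 2 - 2 * phi (X t₀))) :
    ∀ s ∈ J, V s > Real.sqrt (r ^ 2 - 2 * phi (X s)) := by
  have hphid : Differentiable ℝ phi := hphi.differentiable one_ne_zero
  set E : ℝ → ℝ := fun s => V s ^ 2 + 2 * phi (X s) with hE
  -- energy derivative is zero on J
  have hE' : ∀ s ∈ J, HasDerivWithinAt E 0 J s := by
    intro s hs
    have h1 : HasDerivWithinAt (fun s => V s ^ 2)
        (2 * V s * (-deriv phi (X s))) J s := by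
      simpa [mul_comm] using ((hV s hs).fun_pow 2)
    have h2 : HasDerivWithinAt (fun s => phi (X s)) (deriv phi (X s) * V s) J s :=
      ((hphid (X s)).hasDerivAt.comp_hasDerivWithinAt s (hX s hs))
    have : HasDerivWithinAt E (2 * V s * (-deriv phi (X s)) + 2 * (deriv phi (X s) * V s)) J s :=
      h1.fun_add (h2.const_mul 2)
    convert this using 1
    ring
  -- energy is constant on J
  have hcont : ContinuousOn E J := fun s hs => (hE' s hs).continuousWithinAt
  have hconst : ∀ s ∈ J, E s = E t₀ := by
    have key : ∀ a ∈ J, ∀ b ∈ J, a ≤ b → E b = E a := by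
      intro a ha b hb hab
      have hsub : Icc a b ⊆ J := hJ.out ha hb
      refine constant_of_has_deriv_right_zero (hcont.mono hsub) (fun x hx => ?_) b
        (right_mem_Icc.2 hab)
      have hxJ : x ∈ J := hsub (Ico_subset_Icc_self hx)
      have h0 : HasDerivWithinAt E 0 (Icc a b) x := (hE' x hxJ).mono hsub
      exact h0.mono_of_mem_nhdsWithin (Icc_mem_nhdsGE_of_mem hx)
    intro s hs
    rcases le_total s t₀ with h | h
    · exact (key s hs t₀ ht₀ h).symm ▸ rfl
    · exact key t₀ ht₀ s hs h
  -- strict inequality of energy at t₀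
  have hq₀ : 0 ≤ r ^ 2 - 2 * phi (X t₀) := by
    have := hneg (X t₀) (Ioo_subset_Icc_self (hin t₀ ht₀))
    nlinarith
  have hv₀pos : 0 < V t₀ := lt_of_le_of_lt (Real.sqrt_nonneg _) hv₀
  have hE₀ : r ^ 2 < E t₀ := by
    have := (Real.sqrt_lt' hv₀pos).1 hv₀
    simp only [hE]; nlinarith
  -- hence V s ^ 2 > r² - 2 φ(X s) ≥ 0 on J
  have hsq : ∀ s ∈ J, r ^ 2 - 2 * phi (X s) < V s ^ 2 := by
    intro s hs
    have h1 := hconst s hs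
    simp only [hE] at h1
    have h2 : r ^ 2 < V t₀ ^ 2 + 2 * phi (X t₀) := by simpa [hE] using hE₀
    nlinarith
  have hq : ∀ s ∈ J, 0 ≤ r ^ 2 - 2 * phi (X s) := by
    intro s hs
    have := hneg (X s) (Ioo_subset_Icc_self (hin s hs))
    nlinarith
  -- V never vanishes on J, so V > 0 on J by connectedness
  have hVcont : ContinuousOn V J := fun s hs => (hV s hs).continuousWithinAt
  have hpre : IsPreconnected J := hJ.isPreconnected
  have hVpos : ∀ s ∈ J, 0 < V s := by
    intro s hs
    by_contra h
    push_neg at h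
    have hVs : V s < 0 := by
      rcases lt_or_eq_of_le h with h' | h'
      · exact h'
      · exfalso; have := hsq s hs; have := hq s hs; nlinarith
    have : (0:ℝ) ∈ V '' J := by
      apply hpre.intermediate_value hs ht₀ hVcont
      exact ⟨hVs.le, hv₀pos.le⟩
    rcases this with ⟨c, hc, hc0⟩
    have h1 := hsq c hc
    have h2 := hq c hc
    rw [hc0] at h1
    nlinarith
  intro s hs
  exact (Real.sqrt_lt' (hVpos s hs)).2 (hsq s hs)
end

section
/- Let φ : ℝ → ℝ be continuously differentiable, nonincreasing on [0,1], with φ(x) ≤ 0 for all x ∈ [0,1]. Let x ∈ (0,1) and v > √(−2φ(x)), and let (X,V) be the solution of X'(s) = V(s), V'(s) = −φ'(X(s)) with X(0) = x, V(0) = v. Set τ = ∫ₓ¹ du / √(v² + 2(φ(x) − φ(u))). Then X(τ) = 1 and X(s) ∈ (0,1) for every s ∈ [0,τ). -/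
open Set

set_option maxHeartbeats 1000000 in
/-- Explicit formula for the outgoing time of a characteristic in `D⁺`: for a nonpositive
nonincreasing potential `φ` and a starting point `(x,v)` with `v > √(-2φ(x))`,
the characteristic through `(x,v)` at time `0` reaches `x = 1` exactly at time
`τ = ∫_x^1 du / √(v² + 2(φ(x) - φ(u)))`, staying in the slab `(0,1)` before `τ`. -/
theorem outgoing_time_formula (phi : ℝ → ℝ) (hphi : ContDiff ℝ 1 phi)
    (hmono : AntitoneOn phi (Icc 0 1))
    (hneg : ∀ x ∈ Icc (0:ℝ) 1, phi x ≤ 0)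
    (x v : ℝ) (hx : x ∈ Ioo (0:ℝ) 1) (hv : v > Real.sqrt (-2 * phi x))
    (X V : ℝ → ℝ)
    (hX : ∀ s, HasDerivAt X (V s) s)
    (hV : ∀ s, HasDerivAt V (-deriv phi (X s)) s)
    (hX0 : X 0 = x) (hV0 : V 0 = v)
    (τ : ℝ) (hτ : τ = ∫ u in x..1, 1 / Real.sqrt (v ^ 2 + 2 * (phi x - phi u))) :
    X τ = 1 ∧ ∀ s ∈ Ico (0:ℝ) τ, X s ∈ Ioo (0:ℝ) 1 := by
  obtain ⟨hx0, hx1⟩ := hx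
  have hv0 : 0 < v := lt_of_le_of_lt (Real.sqrt_nonneg _) hv
  have hphix : phi x ≤ 0 := hneg x ⟨hx0.le, hx1.le⟩
  have he : 0 < v ^ 2 + 2 * phi x := by
    have := (Real.sqrt_lt' hv0).mp hv
    linarith
  set c : ℝ := Real.sqrt (v ^ 2 + 2 * phi x) with hc_def
  have hc : 0 < c := Real.sqrt_pos.mpr he
  have hc2 : c ^ 2 = v ^ 2 + 2 * phi x := Real.sq_sqrt he.le
  set g : ℝ → ℝ := fun u => Real.sqrt (v ^ 2 + 2 * (phi x - phi u)) with hg_def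
  have hg_lb : ∀ u ∈ Icc (0:ℝ) 1, c ≤ g u := by
    intro u hu
    exact Real.sqrt_le_sqrt (by have := hneg u hu; linarith)
  have contX : Continuous X := Differentiable.continuous fun s => (hX s).differentiableAt
  have contV : Continuous V := Differentiable.continuous fun s => (hV s).differentiableAt
  have hcv : c ≤ v := by
    have h := Real.sqrt_le_sqrt (show v ^ 2 + 2 * phi x ≤ v ^ 2 by linarith)
    rwa [Real.sqrt_sq hv0.le] at h
  -- Energy conservation
  have energy : ∀ s, V s ^ 2 + 2 * phi (X s) = v ^ 2 + 2 * phi x := by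
    have hF : ∀ s, HasDerivAt (fun s => V s ^ 2 + 2 * phi (X s)) 0 s := by
      intro s
      have h1 : HasDerivAt (fun s => V s ^ 2)
          ((2 : ℕ) * V s ^ (2 - 1) * (-deriv phi (X s))) s := (hV s).pow 2
      have hphid : HasDerivAt phi (deriv phi (X s)) (X s) :=
        ((hphi.differentiable one_ne_zero) (X s)).hasDerivAt
      have h2 : HasDerivAt (fun s => phi (X s)) (deriv phi (X s) * V s) s :=
        hphid.comp s (hX s)
      have this : HasDerivAt (fun s => V s ^ 2 + 2 * phi (X s))
          ((2 : ℕ) * V s ^ (2 - 1) * (-deriv phi (X s)) + 2 * (deriv phi (X s) * V s)) s :=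
        h1.add (h2.const_mul 2)
      convert this using 1
      push_cast
      ring
    have hconst := is_const_of_deriv_eq_zero
      (f := fun s => V s ^ 2 + 2 * phi (X s))
      (fun s => (hF s).differentiableAt) (fun s => (hF s).deriv)
    intro s
    have h := hconst s 0
    simp only [hX0, hV0] at h
    exact h
  have Vsq : ∀ s, X s ∈ Icc (0:ℝ) 1 → c ^ 2 ≤ V s ^ 2 := by
    intro s hs
    have := energy s
    have := hneg (X s) hs
    linarith
  -- positivity of the velocity while the particle stays in the slab
  have Vpos : ∀ s, 0 ≤ s → (∀ t ∈ Icc 0 s, X t ∈ Icc (0:ℝ) 1) →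
      ∀ t ∈ Icc 0 s, c ≤ V t := by
    intro s hs hmem t ht
    by_contra hlt
    push_neg at hlt
    have habs : c ≤ |V t| := by
      rw [← Real.sqrt_sq hc.le, ← Real.sqrt_sq_eq_abs]
      exact Real.sqrt_le_sqrt (Vsq t (hmem t ht))
    have hVtneg : V t ≤ -c := by
      rcases abs_cases (V t) with ⟨h1, _⟩ | ⟨h1, _⟩
      · linarith
      · linarith
    -- V 0 = v ≥ c > 0 > V t, so V vanishes somewhere in [0, t]
    have hivt : (0:ℝ) ∈ V '' Icc 0 t := by
      apply intermediate_value_Icc' ht.1 contV.continuousOn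
      constructor
      · linarith
      · rw [hV0]; linarith
    obtain ⟨r, hr, hVr⟩ := hivt
    have hrs : r ∈ Icc 0 s := ⟨hr.1, le_trans hr.2 ht.2⟩
    have := Vsq r (hmem r hrs)
    rw [hVr] at this
    nlinarith
  -- lower bound on X from the MVT
  have Xlb : ∀ s, 0 ≤ s → (∀ t ∈ Icc 0 s, c ≤ V t) →
      ∀ t ∈ Icc 0 s, x + c * t ≤ X t := by
    intro s hs hVc t ht
    have hd : ∀ r, HasDerivAt (fun r => X r - c * r) (V r - c) r := by
      intro r
      have h := (hX r).sub ((hasDerivAt_id r).const_mul c)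
      simp only [mul_one] at h
      exact h
    have hcont : Continuous (fun r => X r - c * r) :=
      Differentiable.continuous fun r => (hd r).differentiableAt
    have hmono' : MonotoneOn (fun r => X r - c * r) (Icc 0 s) := by
      apply monotoneOn_of_deriv_nonneg (convex_Icc 0 s) hcont.continuousOn
        (fun r _ => (hd r).differentiableAt.differentiableWithinAt)
      intro r hr
      rw [interior_Icc] at hr
      rw [(hd r).deriv]
      have := hVc r ⟨hr.1.le, hr.2.le⟩
      linarith
    have h : X 0 - c * 0 ≤ X t - c * t := hmono' ⟨le_rfl, hs⟩ ht ht.1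
    rw [hX0] at h
    linarith
  -- the hitting-time construction
  set L : ℝ := (1 - x) / c with hL_def
  have hcne : c ≠ 0 := hc.ne'
  have hLc : x + c * L = 1 := by rw [hL_def]; field_simp; ring
  have hL0 : 0 ≤ L := div_nonneg (by linarith) hc.le
  set S : Set ℝ := {s | s ∈ Icc 0 L ∧ ∀ t ∈ Icc 0 s, x + c * t ≤ X t ∧ X t ≤ 1}
    with hS_def
  have h0S : (0:ℝ) ∈ S := by
    refine ⟨⟨le_rfl, hL0⟩, fun t ht => ?_⟩
    have : t = 0 := le_antisymm ht.2 ht.1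
    subst this
    rw [hX0]
    constructor <;> linarith
  have hSne : S.Nonempty := ⟨0, h0S⟩
  have hSbdd : BddAbove S := ⟨L, fun s hs => hs.1.2⟩
  set T : ℝ := sSup S with hT_def
  have hT0 : 0 ≤ T := le_csSup hSbdd h0S
  have hTL : T ≤ L := csSup_le hSne fun s hs => hs.1.2
  have hTmem : ∀ t ∈ Icc 0 T, x + c * t ≤ X t ∧ X t ≤ 1 := by
    intro t ht
    rcases eq_or_lt_of_le ht.2 with heq | hlt
    · -- t = T : pass to the limit from the left
      rcases eq_or_lt_of_le ht.1 with h0 | h0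
      · rw [← h0, hX0]
        constructor <;> linarith
      · have hev : ∀ᶠ r in nhdsWithin t (Iio t),
            x + c * r ≤ X r ∧ X r ≤ 1 := by
          filter_upwards [Ioo_mem_nhdsLT_of_mem (⟨h0, le_rfl⟩ : t ∈ Ioc 0 t)]
          intro r hr
          obtain ⟨s', hs'S, hrs'⟩ := exists_lt_of_lt_csSup hSne (heq ▸ hr.2)
          exact hs'S.2 r ⟨hr.1.le, hrs'.le⟩
        haveI : (nhdsWithin t (Iio t)).NeBot := by infer_instance
        constructor
        · have htd : Filter.Tendsto (fun r => X r - (x + c * r))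
              (nhdsWithin t (Iio t)) (nhds (X t - (x + c * t))) := by
            apply Filter.Tendsto.mono_left _ nhdsWithin_le_nhds
            exact ((contX.sub (continuous_const.add (continuous_const.mul continuous_id))).tendsto t)
          have h0le : (0:ℝ) ≤ X t - (x + c * t) :=
            ge_of_tendsto htd (hev.mono fun r h => by linarith [h.1])
          linarith
        · exact le_of_tendsto ((contX.tendsto t).mono_left nhdsWithin_le_nhds)
            (hev.mono fun r h => h.2)
    · obtain ⟨s', hs'S, hts'⟩ := exists_lt_of_lt_csSup hSne hlt
      exact hs'S.2 t ⟨ht.1, hts'.le⟩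
  have hXT1 : X T = 1 := by
    by_contra hne
    have hXTle : X T ≤ 1 := (hTmem T ⟨hT0, le_rfl⟩).2
    have hXTge : x + c * T ≤ X T := (hTmem T ⟨hT0, le_rfl⟩).1
    have hlt1 : X T < 1 := lt_of_le_of_ne hXTle hne
    have hTltL : T < L := by nlinarith
    -- continuity of X at T
    have hcontT : ContinuousAt X T := contX.continuousAt
    rw [Metric.continuousAt_iff] at hcontT
    obtain ⟨δ, hδ, hδ'⟩ := hcontT (min (1 - X T) x) (by
      apply lt_min <;> linarith)
    set ε : ℝ := min (δ / 2) (L - T) with hε_def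
    have hε : 0 < ε := lt_min (by linarith) (by linarith)
    have hnear : ∀ t ∈ Icc T (T + ε), X t < 1 ∧ 0 ≤ X t := by
      intro t ht
      have : dist t T < δ := by
        rw [Real.dist_eq, abs_of_nonneg (by linarith [ht.1])]
        have : ε ≤ δ / 2 := min_le_left _ _
        linarith [ht.2]
      have hd2 := hδ' this
      rw [Real.dist_eq, abs_lt] at hd2
      obtain ⟨hdl, hdr⟩ := hd2
      constructor
      · have h1 : X t - X T < 1 - X T := lt_of_lt_of_le hdr (min_le_left _ _)
        linarith
      · have h3 : min (1 - X T) x ≤ x := min_le_right _ _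
        linarith [mul_nonneg hc.le hT0]
    have hmem01 : ∀ t ∈ Icc 0 (T + ε), X t ∈ Icc (0:ℝ) 1 := by
      intro t ht
      rcases le_or_gt t T with hle | hgt
      · obtain ⟨h1, h2⟩ := hTmem t ⟨ht.1, hle⟩
        constructor
        · nlinarith [mul_nonneg hc.le ht.1]
        · exact h2
      · have := hnear t ⟨hgt.le, ht.2⟩
        exact ⟨this.2, this.1.le⟩
    have hVc := Vpos (T + ε) (by linarith) hmem01
    have hXl := Xlb (T + ε) (by linarith) hVc
    have hTεS : T + ε ∈ S := by
      refine ⟨⟨by linarith, by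
        have : ε ≤ L - T := min_le_right _ _
        linarith⟩, fun t ht => ⟨hXl t ht, ?_⟩⟩
      rcases le_or_gt t T with hle | hgt
      · exact (hTmem t ⟨ht.1, hle⟩).2
      · exact (hnear t ⟨hgt.le, ht.2⟩).1.le
    have := le_csSup hSbdd hTεS
    linarith
  -- bounds and positivity on [0, T]
  have hXIcc : ∀ t ∈ Icc 0 T, X t ∈ Icc (0:ℝ) 1 := by
    intro t ht
    obtain ⟨h1, h2⟩ := hTmem t ht
    exact ⟨by nlinarith [mul_nonneg hc.le ht.1], h2⟩
  have hVT : ∀ t ∈ Icc 0 T, c ≤ V t := Vpos T hT0 hXIcc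
  have hXx : ∀ t ∈ Icc 0 T, x ≤ X t := by
    intro t ht
    have := (hTmem t ht).1
    nlinarith [mul_nonneg hc.le ht.1]
  -- strict monotonicity
  have hSM : StrictMonoOn X (Icc 0 T) := by
    apply strictMonoOn_of_deriv_pos (convex_Icc 0 T) contX.continuousOn
    intro t ht
    rw [interior_Icc] at ht
    rw [(hX t).deriv]
    have := hVT t ⟨ht.1.le, ht.2.le⟩
    linarith
  -- V t = g (X t) on [0, T]
  have hVeq : ∀ t ∈ Icc 0 T, V t = g (X t) := by
    intro t ht
    have h1 : v ^ 2 + 2 * (phi x - phi (X t)) = V t ^ 2 := by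
      have := energy t; linarith
    have h2 : (0:ℝ) ≤ V t := le_trans hc.le (hVT t ht)
    rw [hg_def]
    simp only [h1]
    rw [Real.sqrt_sq h2]
  -- change of variables
  have huIcc : uIcc (0:ℝ) T = Icc 0 T := uIcc_of_le hT0
  have hgcont : ContinuousOn (fun u => 1 / g u) (X '' uIcc (0:ℝ) T) := by
    have hsub : X '' uIcc (0:ℝ) T ⊆ Icc (0:ℝ) 1 := by
      rw [huIcc]
      rintro _ ⟨t, ht, rfl⟩
      exact hXIcc t ht
    apply ContinuousOn.div continuousOn_const
    · apply Continuous.continuousOn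
      exact Real.continuous_sqrt.comp
        (continuous_const.add (continuous_const.mul (continuous_const.sub hphi.continuous)))
    · intro u hu
      have := hg_lb u (hsub hu)
      exact (lt_of_lt_of_le hc this).ne'
  have hsubst : (∫ s in (0:ℝ)..T, V s • ((fun u => 1 / g u) ∘ X) s)
      = ∫ u in (X 0)..(X T), 1 / g u :=
    intervalIntegral.integral_comp_smul_deriv' (fun s _ => hX s)
      contV.continuousOn hgcont
  have hlhs : (∫ s in (0:ℝ)..T, V s • ((fun u => 1 / g u) ∘ X) s)
      = ∫ s in (0:ℝ)..T, (1:ℝ) := by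
    apply intervalIntegral.integral_congr
    intro s hs
    rw [huIcc] at hs
    have hVg := hVeq s hs
    have hVpos : 0 < V s := lt_of_lt_of_le hc (hVT s hs)
    have hVne : V s ≠ 0 := hVpos.ne'
    simp only [Function.comp_apply, smul_eq_mul, ← hVg]
    field_simp
  have hτT : τ = T := by
    have h1 : (∫ s in (0:ℝ)..T, (1:ℝ)) = T := by simp
    rw [hX0, hXT1, hlhs, h1] at hsubst
    simp only [hg_def] at hsubst
    rw [hτ, ← hsubst]
  refine ⟨by rw [hτT]; exact hXT1, ?_⟩
  intro s hs
  rw [hτT] at hs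
  refine ⟨lt_of_lt_of_le hx0 (hXx s ⟨hs.1, hs.2.le⟩), ?_⟩
  have := hSM ⟨hs.1, hs.2.le⟩ ⟨hT0, le_rfl⟩ hs.2
  rwa [hXT1] at this
end

section
/- Let φ : [0,1] → ℝ be continuously differentiable, concave, with φ(0) = 0, φ'(u) < 0 for all u ∈ [0,1]. Then for every x ∈ (0,1], ∫₀ˣ du / √(−2φ(u)) ≤ √(−2φ(x)) / |φ'(0)|. -/
open Set

/-- Tangent line bound for the concave potential: `phi u ≤ phi' 0 * u` on `[0,1]`. -/
lemma tangent_line_bound (phi phi' : ℝ → ℝ)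
    (hderiv : ∀ u ∈ Icc (0:ℝ) 1, HasDerivWithinAt phi (phi' u) (Icc 0 1) u)
    (hconc : ConcaveOn ℝ (Icc 0 1) phi)
    (h0 : phi 0 = 0) :
    ∀ u ∈ Icc (0:ℝ) 1, phi u ≤ phi' 0 * u := by
  intro u hu
  rcases eq_or_lt_of_le hu.1 with rfl | hu0
  · simp [h0]
  have hslope : Filter.Tendsto (slope phi 0) (nhdsWithin 0 (Icc (0:ℝ) 1 \ {0}))
      (nhds (phi' 0)) := by
    rw [← hasDerivWithinAt_iff_tendsto_slope]
    exact hderiv 0 ⟨le_refl _, zero_le_one⟩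
  have hnb : (nhdsWithin (0:ℝ) (Icc (0:ℝ) 1 \ {0})).NeBot := by
    have h1 : (nhdsWithin (0:ℝ) (Ioo (0:ℝ) 1)).NeBot :=
      mem_closure_iff_nhdsWithin_neBot.mp (by
        rw [closure_Ioo one_ne_zero.symm]; exact ⟨le_refl _, zero_le_one⟩)
    refine h1.mono (nhdsWithin_mono 0 ?_)
    intro t ht; exact ⟨⟨ht.1.le, ht.2.le⟩, by simpa using ne_of_gt ht.1⟩
  have hle : slope phi 0 u ≤ phi' 0 := by
    refine ge_of_tendsto hslope ?_
    have hmem : Icc (0:ℝ) 1 \ {0} ∩ Iio u ∈ nhdsWithin 0 (Icc (0:ℝ) 1 \ {0}) := by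
      exact Filter.inter_mem self_mem_nhdsWithin
        (nhdsWithin_le_nhds (Iio_mem_nhds hu0))
    filter_upwards [hmem] with t ht
    obtain ⟨⟨htIcc, htne⟩, htu⟩ := ht
    have ht0 : t ≠ 0 := by simpa using htne
    have h := (hconc.neg).secant_mono (a := 0) (x := t) (y := u)
      ⟨le_refl _, zero_le_one⟩ htIcc hu ht0 (ne_of_gt hu0) htu.le
    simp only [Pi.neg_apply, h0, neg_zero, sub_zero, neg_div] at h
    simp only [slope_def_field, h0, sub_zero]
    linarith
  rw [slope_def_field, h0, sub_zero, sub_zero, div_le_iff₀ hu0] at hle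
  linarith [hle]

/-- Bound on the time of flight in `D⁺`: for a decreasing concave `C¹` potential `φ`
on `[0,1]` with `φ(0) = 0`, for every `x ∈ (0,1]` the (convergent) improper integral
`∫₀ˣ du / √(-2φ(u))` is bounded by `√(-2φ(x)) / |φ'(0)|`. -/
theorem flight_time_bound (phi phi' : ℝ → ℝ)
    (hderiv : ∀ u ∈ Icc (0:ℝ) 1, HasDerivWithinAt phi (phi' u) (Icc 0 1) u)
    (hcont : ContinuousOn phi' (Icc 0 1))
    (hconc : ConcaveOn ℝ (Icc 0 1) phi)
    (h0 : phi 0 = 0)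
    (hneg : ∀ u ∈ Icc (0:ℝ) 1, phi' u < 0) :
    ∀ x ∈ Ioc (0:ℝ) 1,
      IntervalIntegrable (fun u => 1 / Real.sqrt (-2 * phi u)) MeasureTheory.volume 0 x ∧
      ∫ u in (0:ℝ)..x, 1 / Real.sqrt (-2 * phi u) ≤ Real.sqrt (-2 * phi x) / |phi' 0| := by
  intro x hx
  set c : ℝ := -phi' 0 with hc_def
  have hc : 0 < c := by
    have := hneg 0 ⟨le_refl _, zero_le_one⟩
    simp [hc_def]; linarith
  have habs : |phi' 0| = c := by
    rw [abs_of_neg (hneg 0 ⟨le_refl _, zero_le_one⟩)]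
  have key : ∀ u ∈ Icc (0:ℝ) 1, phi u ≤ phi' 0 * u :=
    tangent_line_bound phi phi' hderiv hconc h0
  -- lower bound for -2 phi u
  have hlb : ∀ u ∈ Icc (0:ℝ) 1, 2 * c * u ≤ -2 * phi u := by
    intro u hu
    have := key u hu
    simp only [hc_def]
    nlinarith
  have hsub : Icc (0:ℝ) x ⊆ Icc 0 1 := Icc_subset_Icc le_rfl hx.2
  have hsub' : Ioc (0:ℝ) x ⊆ Icc 0 1 := fun u hu => ⟨hu.1.le, hu.2.trans hx.2⟩
  -- the dominating function
  set g : ℝ → ℝ := fun u => (Real.sqrt (2 * c))⁻¹ * u ^ (-(1/2) : ℝ) with hg_def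
  have hg_int : IntervalIntegrable g MeasureTheory.volume 0 x := by
    exact ((intervalIntegral.intervalIntegrable_rpow' (by norm_num : (-1:ℝ) < -(1/2)))).const_mul _
  -- pointwise bound f ≤ g on Icc 0 x
  have hfg : ∀ u ∈ Icc (0:ℝ) x, 1 / Real.sqrt (-2 * phi u) ≤ g u := by
    intro u hu
    rcases eq_or_lt_of_le hu.1 with rfl | hu0
    · simp [hg_def, h0, Real.zero_rpow (by norm_num : (-(1/2):ℝ) ≠ 0)]
    · have hucc : u ∈ Icc (0:ℝ) 1 := hsub hu
      have h1 : (0:ℝ) < 2 * c * u := by positivity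
      have h2 : 2 * c * u ≤ -2 * phi u := hlb u hucc
      have hsq : Real.sqrt (2 * c * u) ≤ Real.sqrt (-2 * phi u) := Real.sqrt_le_sqrt h2
      have hsqpos : 0 < Real.sqrt (2 * c * u) := Real.sqrt_pos.mpr h1
      have : 1 / Real.sqrt (-2 * phi u) ≤ 1 / Real.sqrt (2 * c * u) :=
        one_div_le_one_div_of_le hsqpos hsq
      refine this.trans_eq ?_
      show 1 / Real.sqrt (2 * c * u) = (Real.sqrt (2 * c))⁻¹ * u ^ (-(1/2) : ℝ)
      rw [Real.sqrt_mul (by positivity) u, Real.rpow_neg hu0.le,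
        ← Real.sqrt_eq_rpow, one_div, mul_inv]
  -- nonnegativity of f
  have hf_nonneg : ∀ u, 0 ≤ 1 / Real.sqrt (-2 * phi u) := fun u => by positivity
  -- continuity of phi on Icc 0 1
  have hphi_cont : ContinuousOn phi (Icc (0:ℝ) 1) := fun u hu =>
    (hderiv u hu).continuousWithinAt
  -- integrability of f
  have hf_int : IntervalIntegrable (fun u => 1 / Real.sqrt (-2 * phi u))
      MeasureTheory.volume 0 x := by
    rw [intervalIntegrable_iff_integrableOn_Ioc_of_le hx.1.le]
    have hg_on : MeasureTheory.IntegrableOn g (Ioc 0 x) MeasureTheory.volume := by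
      rw [← intervalIntegrable_iff_integrableOn_Ioc_of_le hx.1.le]; exact hg_int
    refine MeasureTheory.Integrable.mono hg_on ?_ ?_
    · -- a.e. strong measurability of f on Ioc 0 x
      apply ContinuousOn.aestronglyMeasurable _ measurableSet_Ioc
      apply ContinuousOn.div continuousOn_const
      · exact (Real.continuous_sqrt.comp_continuousOn
          ((continuousOn_const.mul (hphi_cont.mono hsub'))))
      · intro u hu
        have h1 : (0:ℝ) < 2 * c * u := mul_pos (by positivity) hu.1
        have h2 : 2 * c * u ≤ -2 * phi u := hlb u (hsub' hu)
        exact ne_of_gt (Real.sqrt_pos.mpr (lt_of_lt_of_le h1 h2))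
    · rw [MeasureTheory.ae_restrict_iff' measurableSet_Ioc]
      filter_upwards with u hu
      rw [Real.norm_eq_abs, Real.norm_eq_abs, abs_of_nonneg (hf_nonneg u)]
      calc 1 / Real.sqrt (-2 * phi u) ≤ g u := hfg u ⟨hu.1.le, hu.2⟩
        _ ≤ |g u| := le_abs_self _
  refine ⟨hf_int, ?_⟩
  -- compare integrals
  have hint_le : ∫ u in (0:ℝ)..x, 1 / Real.sqrt (-2 * phi u) ≤ ∫ u in (0:ℝ)..x, g u :=
    intervalIntegral.integral_mono_on hx.1.le hf_int hg_int hfg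
  -- compute ∫ g
  have hgval : ∫ u in (0:ℝ)..x, g u = (Real.sqrt (2 * c))⁻¹ * (2 * Real.sqrt x) := by
    rw [hg_def]
    rw [intervalIntegral.integral_const_mul]
    congr 1
    rw [integral_rpow (Or.inl (by norm_num : (-1:ℝ) < -(1/2)))]
    rw [Real.zero_rpow (by norm_num : (-(1/2):ℝ) + 1 ≠ 0)]
    rw [Real.sqrt_eq_rpow]
    norm_num
    ring
  -- final arithmetic
  have hxpos : 0 < x := hx.1
  have h2cx : 2 * c * x ≤ -2 * phi x := hlb x ⟨hxpos.le, hx.2⟩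
  have hsq : Real.sqrt (2 * c) * Real.sqrt x ≤ Real.sqrt (-2 * phi x) := by
    rw [← Real.sqrt_mul (by positivity)]
    exact Real.sqrt_le_sqrt h2cx
  have hs2c : 0 < Real.sqrt (2 * c) := Real.sqrt_pos.mpr (by positivity)
  have heq : (Real.sqrt (2 * c))⁻¹ * (2 * Real.sqrt x)
      = Real.sqrt (2 * c) * Real.sqrt x / c := by
    have hm : Real.sqrt (2*c) * Real.sqrt (2*c) = 2*c :=
      Real.mul_self_sqrt (by positivity)
    have e1 : Real.sqrt 2 * Real.sqrt 2 = 2 := Real.mul_self_sqrt (by norm_num)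
    have e2 : Real.sqrt c * Real.sqrt c = c := Real.mul_self_sqrt hc.le
    rw [eq_div_iff hc.ne', inv_mul_eq_div, div_mul_eq_mul_div, div_eq_iff hs2c.ne']
    linear_combination (-Real.sqrt x) * hm
  rw [habs]
  calc ∫ u in (0:ℝ)..x, 1 / Real.sqrt (-2 * phi u)
      ≤ ∫ u in (0:ℝ)..x, g u := hint_le
    _ = Real.sqrt (2 * c) * Real.sqrt x / c := by rw [hgval, heq]
    _ ≤ Real.sqrt (-2 * phi x) / c := by gcongr
end

section
/- Let φ : ℝ → ℝ be continuously differentiable and strictly decreasing on [0,1]. Let (X,V) be a solution of X'(s) = V(s), V'(s) = −φ'(X(s)) on an interval [a,b] with X(s) ∈ [0,1] for all s ∈ [a,b]. If there exists σ ∈ [a,b] with X(σ) = 1 and V(σ) = 0, then for every t ∈ [a,b], X(t) ∉ (0,1). -/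
open Set

/-- Characterization of the singular set: for `φ` strictly decreasing on `[0,1]`,
a characteristic `X' = V`, `V' = -φ'(X)` staying in `[0,1]` on `[a,b]` and passing
through the boundary phase-space point `(1,0)` never visits an interior spatial point. -/
theorem singular_characteristic (phi : ℝ → ℝ) (hphi : ContDiff ℝ 1 phi)
    (hanti : StrictAntiOn phi (Icc 0 1))
    (a b : ℝ) (hab : a ≤ b)
    (X V : ℝ → ℝ)
    (hX : ∀ s ∈ Icc a b, HasDerivWithinAt X (V s) (Icc a b) s)
    (hV : ∀ s ∈ Icc a b, HasDerivWithinAt V (-deriv phi (X s)) (Icc a b) s)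
    (hin : ∀ s ∈ Icc a b, X s ∈ Icc (0:ℝ) 1)
    (σ : ℝ) (hσ : σ ∈ Icc a b) (hXσ : X σ = 1) (hVσ : V σ = 0) :
    ∀ t ∈ Icc a b, X t ∉ Ioo (0:ℝ) 1 := by
  intro t ht hmem
  rcases eq_or_lt_of_le hab with rfl | hlt
  · have : t = σ := by
      have h1 := ht.1; have h2 := ht.2; have h3 := hσ.1; have h4 := hσ.2
      linarith
    rw [this, hXσ] at hmem
    exact lt_irrefl _ hmem.2
  -- energy function
  set E : ℝ → ℝ := fun s => V s ^ 2 / 2 + phi (X s) with hE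
  have hdphi : Differentiable ℝ phi := hphi.differentiable one_ne_zero
  have hEderiv : ∀ s ∈ Icc a b, HasDerivWithinAt E 0 (Icc a b) s := by
    intro s hs
    have h1 : HasDerivWithinAt (fun u => V u ^ 2 / 2) (V s * (-deriv phi (X s))) (Icc a b) s := by
      have := ((hV s hs).pow 2).div_const 2
      refine this.congr_deriv ?_
      ring_nf
    have h2 : HasDerivWithinAt (fun u => phi (X u)) (deriv phi (X s) * V s) (Icc a b) s :=
      (hdphi (X s)).hasDerivAt.comp_hasDerivWithinAt s (hX s hs)
    have := h1.add h2
    refine this.congr_deriv ?_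
    ring
  have hEconst : ∀ s ∈ Icc a b, E s = E a := by
    have hdiff : DifferentiableOn ℝ E (Icc a b) :=
      fun s hs => (hEderiv s hs).differentiableWithinAt
    intro s hs
    apply constant_of_derivWithin_zero hdiff _ s hs
    intro x hx
    have hx' : x ∈ Icc a b := Ico_subset_Icc_self hx
    exact ((hEderiv x hx').derivWithin (uniqueDiffOn_Icc hlt x hx'))
  have h1 := hEconst t ht
  have h2 := hEconst σ hσ
  have hEσ : E σ = phi 1 := by simp [hE, hXσ, hVσ]
  have hEt : V t ^ 2 / 2 + phi (X t) = phi 1 := by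
    have : E t = E σ := h1.trans h2.symm
    rw [← hEσ, ← this]
  have hlt' : phi 1 < phi (X t) :=
    hanti (hin t ht) (right_mem_Icc.2 (by norm_num)) hmem.2
  nlinarith [sq_nonneg (V t)]
end
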